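/- arXiv:1711.08650 — 11 statements merged into one kernel-verified Lean document; each statement's English description precedes it below -/
import Mathlib

section
/- If H is a characteristic subgroup of a group G and the quotient G/H has the R∞ property, then G has the R∞ property. -/
/-- The twisted conjugacy relation determined by an endomorphism `φ`. -/
def twistedRel {G : Type*} [Group G] (φ : G →* G) (x y : G) : Prop :=
  ∃ z : G, x = z * y * (φ z)⁻¹

/-- The setoid of `φ`-twisted conjugacy. -/
def twistedSetoid {G : Type*} [Group G] (φ : G →* G) : Setoid G :=
  ⟨twistedRel φ, by
    constructor
    · intro x; exact ⟨1, by simp⟩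
    · rintro x y ⟨z, rfl⟩
      exact ⟨z⁻¹, by simp [mul_assoc]⟩
    · rintro x y w ⟨z₁, rfl⟩ ⟨z₂, hz₂⟩
      subst hz₂
      exact ⟨z₁ * z₂, by simp [mul_assoc]⟩⟩

/-- A group has the `R∞` property if every automorphism has infinitely many twisted
conjugacy classes. -/
def hasRinf (G : Type*) [Group G] : Prop :=
  ∀ φ : G ≃* G, Infinite (Quotient (twistedSetoid φ.toMonoidHom))

/-- If `H` is a characteristic subgroup of `G` and `G ⧸ H` has the `R∞` property, then so
does `G`. -/
theorem rinf_of_quotient_rinf {G : Type*} [Group G] (H : Subgroup G) [H.Normal]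
    (hchar : H.Characteristic) (hq : hasRinf (G ⧸ H)) : hasRinf G := by
  intro φ
  have hmap : H.map φ.toMonoidHom = H :=
    (Subgroup.characteristic_iff_map_eq.mp hchar) φ
  let ψ : (G ⧸ H) ≃* (G ⧸ H) := QuotientGroup.congr H H φ hmap
  have hcomm : ∀ g : G, ψ (QuotientGroup.mk g) = QuotientGroup.mk (φ g) := fun g => rfl
  let F : Quotient (twistedSetoid φ.toMonoidHom) → Quotient (twistedSetoid ψ.toMonoidHom) :=
    Quotient.lift (fun g => Quotient.mk (twistedSetoid ψ.toMonoidHom) (QuotientGroup.mk g))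
      (by
        rintro x y ⟨z, rfl⟩
        apply Quotient.sound
        exact ⟨QuotientGroup.mk z, by
          simp [hcomm, QuotientGroup.mk_mul, QuotientGroup.mk_inv]⟩)
  have hsurj : Function.Surjective F := by
    intro q
    obtain ⟨x, rfl⟩ := Quotient.exists_rep q
    obtain ⟨g, rfl⟩ := QuotientGroup.mk_surjective x
    exact ⟨Quotient.mk _ g, rfl⟩
  have := hq ψ
  exact this.of_surjective _ hsurj
end

section
/- The Reidemeister spectrum of ℤ² is ℕ ∪ {∞}: for every positive integer m there is an automorphism of ℤ² with Reidemeister number m, and there is one with infinite Reidemeister number. -/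
/-- The twisted conjugacy setoid for an endomorphism of an additive abelian group:
`x ∼ y ↔ ∃ z, x = z + y - φ z`. -/
def addTwistedSetoid {A : Type*} [AddCommGroup A] (φ : A ≃+ A) : Setoid A :=
  ⟨fun x y => ∃ z : A, x = z + y - φ z, by
    constructor
    · intro x; exact ⟨0, by simp⟩
    · rintro x y ⟨z, rfl⟩; exact ⟨-z, by simp; abel⟩
    · rintro x y w ⟨z₁, rfl⟩ ⟨z₂, hz₂⟩
      subst hz₂
      exact ⟨z₁ + z₂, by simp; abel⟩⟩

/-- The automorphism of `ℤ²` given by the matrix `[[m, 1], [1, 0]]`. -/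
def phiM (m : ℕ) : (Fin 2 → ℤ) ≃+ (Fin 2 → ℤ) where
  toFun v := ![(m : ℤ) * v 0 + v 1, v 0]
  invFun w := ![w 1, w 0 - (m : ℤ) * w 1]
  left_inv v := by
    funext i; fin_cases i <;> simp <;> ring
  right_inv w := by
    funext i; fin_cases i <;> simp <;> ring
  map_add' x y := by
    funext i; fin_cases i <;> simp [Pi.add_apply] <;> ring

lemma phiM_rel (m : ℕ) (hm : 0 < m) (x y : Fin 2 → ℤ)
    (h : ((x 0 + x 1 : ℤ) : ZMod m) = ((y 0 + y 1 : ℤ) : ZMod m)) :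
    (addTwistedSetoid (phiM m)).r x y := by
  have hdvd : (m : ℤ) ∣ (x 0 + x 1 - (y 0 + y 1)) := by
    have : (((x 0 + x 1 - (y 0 + y 1)) : ℤ) : ZMod m) = 0 := by
      push_cast
      rw [sub_eq_zero]
      push_cast at h
      linear_combination h
    exact (ZMod.intCast_zmod_eq_zero_iff_dvd _ m).mp this
  obtain ⟨k, hk⟩ := hdvd
  refine ⟨![-k, -k + (x 1 - y 1)], ?_⟩
  funext i
  fin_cases i <;>
    (simp [phiM, Pi.add_apply, Pi.sub_apply, Matrix.vecHead, Matrix.vecTail]; linarith [hk])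

/-- The Reidemeister spectrum of `ℤ²` is `ℕ ∪ {∞}`: every positive integer is the
Reidemeister number of some automorphism, and some automorphism has infinite Reidemeister
number. -/
theorem reidemeister_spectrum_Z2 :
    (∀ m : ℕ, 0 < m → ∃ φ : (Fin 2 → ℤ) ≃+ (Fin 2 → ℤ),
      Nat.card (Quotient (addTwistedSetoid φ)) = m) ∧
    (∃ φ : (Fin 2 → ℤ) ≃+ (Fin 2 → ℤ), Infinite (Quotient (addTwistedSetoid φ))) := by
  constructor
  · intro m hm
    refine ⟨phiM m, ?_⟩
    have e : Quotient (addTwistedSetoid (phiM m)) ≃ ZMod m := by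
      refine
        { toFun := Quotient.lift (fun v => ((v 0 + v 1 : ℤ) : ZMod m)) ?_
          invFun := fun c => Quotient.mk _ ![(c.val : ℤ), 0]
          left_inv := ?_
          right_inv := ?_ }
      · rintro x y ⟨z, rfl⟩
        simp only [phiM, AddEquiv.coe_mk, Equiv.coe_fn_mk, Pi.add_apply, Pi.sub_apply]
        push_cast
        push_cast
        ring_nf
        rw [ZMod.natCast_self]
        ring
      · refine fun q => Quotient.inductionOn q (fun v => ?_)
        refine Quotient.sound ((addTwistedSetoid (phiM m)).symm ?_)
        apply phiM_rel m hm
        haveI : NeZero m := ⟨hm.ne'⟩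
        push_cast
        simp [ZMod.natCast_val, ZMod.cast_id]
      · intro c
        have : (0 : ℕ) < m := hm
        haveI : NeZero m := ⟨hm.ne'⟩
        simp [ZMod.intCast_cast, ZMod.natCast_val, ZMod.cast_id]
    rw [Nat.card_congr e, Nat.card_zmod]
  · refine ⟨AddEquiv.refl _, ?_⟩
    have hlift : ∀ x y : Fin 2 → ℤ,
        (addTwistedSetoid (AddEquiv.refl (Fin 2 → ℤ))).r x y → x = y := by
      rintro x y ⟨z, rfl⟩; simp
    exact Infinite.of_surjective
      (Quotient.lift (id : (Fin 2 → ℤ) → (Fin 2 → ℤ)) hlift)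
      (fun v => ⟨Quotient.mk _ v, rfl⟩)
end

section
/- Let n ≥ 2 be an integer. For every positive integer m there exists a matrix M ∈ GL_n(ℤ) with |det(I − M)| = m; hence the Reidemeister spectrum of ℤⁿ is ℕ ∪ {∞}. -/
open Matrix

private lemma aux_step (n : ℕ) (m : ℕ)
    (h : ∃ M : Matrix (Fin n) (Fin n) ℤ, IsUnit M.det ∧ (1 - M).det.natAbs = m) :
    ∃ M : Matrix (Fin (n + 2)) (Fin (n + 2)) ℤ, IsUnit M.det ∧ (1 - M).det.natAbs = m := by
  obtain ⟨M, hM, hM1⟩ := h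
  have hB : (!![0, 1; 1, -1] : Matrix (Fin 2) (Fin 2) ℤ).det = -1 := by
    rw [det_fin_two_of]; ring
  have hB1 : ((1 : Matrix (Fin 2) (Fin 2) ℤ) - !![0, 1; 1, -1]).det = 1 := by
    simp [det_fin_two, Matrix.sub_apply, Matrix.one_apply]
  refine ⟨Matrix.reindex finSumFinEquiv finSumFinEquiv
      (fromBlocks M 0 0 !![0, 1; 1, -1]), ?_, ?_⟩
  · rw [det_reindex_self, det_fromBlocks_zero₁₂, hB]
    simpa using hM.neg
  · have h1 : (1 : Matrix (Fin (n+2)) (Fin (n+2)) ℤ) =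
        Matrix.reindex finSumFinEquiv finSumFinEquiv
          (fromBlocks (1 : Matrix (Fin n) (Fin n) ℤ) 0 0 (1 : Matrix (Fin 2) (Fin 2) ℤ)) := by
      rw [fromBlocks_one]
      simp [reindex_apply, submatrix_one_equiv]
    have key : fromBlocks (1 : Matrix (Fin n) (Fin n) ℤ) 0 0 (1 : Matrix (Fin 2) (Fin 2) ℤ) -
        fromBlocks M 0 0 !![0, 1; 1, -1] =
        fromBlocks (1 - M) 0 0 (1 - !![0, 1; 1, -1]) := by
      rw [sub_eq_add_neg, fromBlocks_neg, fromBlocks_add]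
      congr 1
    have h2 : (1 : Matrix (Fin (n+2)) (Fin (n+2)) ℤ) -
        Matrix.reindex finSumFinEquiv finSumFinEquiv (fromBlocks M 0 0 !![0, 1; 1, -1]) =
        Matrix.reindex finSumFinEquiv finSumFinEquiv
          (fromBlocks (1 - M) 0 0 (1 - !![0, 1; 1, -1])) := by
      rw [h1, reindex_apply, reindex_apply, reindex_apply]
      rw [← key]; rfl
    rw [h2, det_reindex_self, det_fromBlocks_zero₁₂, hB1, mul_one, hM1]

private lemma aux_two (m : ℕ) :
    ∃ M : Matrix (Fin 2) (Fin 2) ℤ, IsUnit M.det ∧ (1 - M).det.natAbs = m := by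
  refine ⟨!![0, 1; 1, -(m : ℤ)], ?_, ?_⟩
  · have : (!![0, 1; 1, -(m : ℤ)]).det = -1 := by rw [det_fin_two_of]; ring
    rw [this]; exact isUnit_one.neg
  · have : ((1 : Matrix (Fin 2) (Fin 2) ℤ) - !![0, 1; 1, -(m : ℤ)]).det = m := by
      simp [det_fin_two, Matrix.sub_apply, Matrix.one_apply]
    rw [this, Int.natAbs_natCast]

private lemma aux_three (m : ℕ) :
    ∃ M : Matrix (Fin 3) (Fin 3) ℤ, IsUnit M.det ∧ (1 - M).det.natAbs = m := by
  refine ⟨!![0, 0, 1; 1, 0, -(m : ℤ); 0, 1, 0], ?_, ?_⟩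
  · have : (!![0, 0, 1; 1, 0, -(m : ℤ); 0, 1, 0]).det = 1 := by
      simp [det_fin_three]
    rw [this]; exact isUnit_one
  · have : ((1 : Matrix (Fin 3) (Fin 3) ℤ) - !![0, 0, 1; 1, 0, -(m : ℤ); 0, 1, 0]).det = m := by
      simp [det_fin_three, Matrix.sub_apply, Matrix.one_apply]
    rw [this, Int.natAbs_natCast]

private lemma aux_all (m : ℕ) (j : ℕ) :
    (∃ M : Matrix (Fin (2 + 2*j)) (Fin (2 + 2*j)) ℤ, IsUnit M.det ∧ (1 - M).det.natAbs = m) ∧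
    (∃ M : Matrix (Fin (3 + 2*j)) (Fin (3 + 2*j)) ℤ, IsUnit M.det ∧ (1 - M).det.natAbs = m) := by
  induction j with
  | zero => exact ⟨aux_two m, aux_three m⟩
  | succ j ih =>
    constructor
    · have h : 2 + 2*(j+1) = (2 + 2*j) + 2 := by ring
      rw [h]; exact aux_step _ _ ih.1
    · have h : 3 + 2*(j+1) = (3 + 2*j) + 2 := by ring
      rw [h]; exact aux_step _ _ ih.2

/-- For `n ≥ 2` and every positive integer `m` there is `M ∈ GL_n(ℤ)` with
`|det (I - M)| = m`; hence the Reidemeister spectrum of `ℤⁿ` is `ℕ ∪ {∞}`. -/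
theorem exists_matrix_with_det_one_sub (n : ℕ) (hn : 2 ≤ n) (m : ℕ) (hm : 0 < m) :
    ∃ M : Matrix (Fin n) (Fin n) ℤ, IsUnit M.det ∧ (1 - M).det.natAbs = m := by
  obtain ⟨j, hj⟩ : ∃ j, n = 2 + 2*j ∨ n = 3 + 2*j := ⟨(n - 2) / 2, by omega⟩
  rcases hj with h | h <;> rw [h]
  · exact (aux_all m j).1
  · exact (aux_all m j).2
end

section
/- Let A ∈ GL_n(ℤ) and let E = ℤⁿ ⋊_A ℤ. If A does not have 1 as an eigenvalue, then the subgroup ℤⁿ is characteristic in E, i.e., every automorphism of E maps ℤⁿ to itself. -/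
/-- The action of `ℤ` on `ℤⁿ` (written multiplicatively) through an automorphism `e`,
defining the semidirect product `ℤⁿ ⋊ ℤ`. -/
def zAction {V : Type*} [AddCommGroup V] (e : V ≃+ V) :
    Multiplicative ℤ →* MulAut (Multiplicative V) :=
  zpowersHom (MulAut (Multiplicative V)) (AddEquiv.toMultiplicative e)

section Aux

variable {n : ℕ} (A : Matrix (Fin n) (Fin n) ℤ)
  (e : (Fin n → ℤ) ≃+ (Fin n → ℤ))

local notation "E" => Multiplicative (Fin n → ℤ) ⋊[zAction e] Multiplicative ℤ

open scoped commutatorElement in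
/-- the basic commutator computation -/
lemma comm_mem (u : Fin n → ℤ) :
    (SemidirectProduct.inl (Multiplicative.ofAdd (e u - u)) : E) ∈ commutator _ := by
  have h : (SemidirectProduct.inl (Multiplicative.ofAdd (e u - u)) : E)
      = ⁅(SemidirectProduct.inr (Multiplicative.ofAdd (1:ℤ)) : E),
         SemidirectProduct.inl (Multiplicative.ofAdd u)⁆ := by
    rw [commutatorElement_def,
      show ((SemidirectProduct.inr (Multiplicative.ofAdd (1:ℤ)) : E))⁻¹
        = SemidirectProduct.inr (Multiplicative.ofAdd (1:ℤ))⁻¹ from (map_inv _ _).symm,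
      ← SemidirectProduct.inl_aut, ← map_inv, ← map_mul]
    rfl
  rw [h]
  exact Subgroup.commutator_mem_commutator (Subgroup.mem_top _) (Subgroup.mem_top _)

lemma key (hA : ∀ v, e v = A.mulVec v) (h1 : (1 - A).det ≠ 0) (g : E) :
    g ∈ SemidirectProduct.inl.range ↔ ∃ k : ℤ, k ≠ 0 ∧ g ^ k ∈ commutator E := by
  constructor
  · rintro ⟨v, rfl⟩
    refine ⟨(1 - A).det, h1, ?_⟩
    set u := (1 - A).adjugate.mulVec (Multiplicative.toAdd v) with hu
    have hdu : (1 - A).det • (Multiplicative.toAdd v) = u - A.mulVec u := by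
      have h : (1 - A).mulVec u = (1 - A).det • Multiplicative.toAdd v := by
        rw [hu, Matrix.mulVec_mulVec, Matrix.mul_adjugate, Matrix.smul_mulVec,
          Matrix.one_mulVec]
      rw [← h, Matrix.sub_mulVec, Matrix.one_mulVec]
    have : (SemidirectProduct.inl v : E) ^ ((1 - A).det)
        = (SemidirectProduct.inl (Multiplicative.ofAdd (e u - u)) : E)⁻¹ := by
      rw [← map_zpow, ← map_inv]
      congr 1
      apply Multiplicative.toAdd.injective
      rw [toAdd_zpow]
      simp [hA, hdu]
    rw [this]
    exact (commutator _).inv_mem (comm_mem e u)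
  · rintro ⟨k, hk, hgk⟩
    rw [SemidirectProduct.range_inl_eq_ker_rightHom, MonoidHom.mem_ker]
    have := Abelianization.commutator_subset_ker
      (SemidirectProduct.rightHom : E →* Multiplicative ℤ) hgk
    rw [MonoidHom.mem_ker, map_zpow] at this
    have h2 : k • Multiplicative.toAdd (SemidirectProduct.rightHom g) = 0 := by
      rw [← toAdd_zpow, this]; rfl
    apply Multiplicative.toAdd.injective
    have := smul_eq_zero.mp h2
    simpa [hk] using this

end Aux

/-- If `A ∈ GL_n(ℤ)` does not have `1` as an eigenvalue (i.e. `det (I - A) ≠ 0`), then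
the subgroup `ℤⁿ` of `ℤⁿ ⋊_A ℤ` is characteristic. -/
theorem Zn_characteristic_in_semidirect (n : ℕ) (A : Matrix (Fin n) (Fin n) ℤ)
    (hA : IsUnit A.det) (h1 : (1 - A).det ≠ 0)
    (e : (Fin n → ℤ) ≃+ (Fin n → ℤ)) (he : ∀ v, e v = A.mulVec v) :
    (SemidirectProduct.inl.range :
      Subgroup (Multiplicative (Fin n → ℤ) ⋊[zAction e] Multiplicative ℤ)).Characteristic := by
  rw [Subgroup.characteristic_iff_comap_eq]
  intro φ
  ext g
  rw [Subgroup.mem_comap, key A e he h1, key A e he h1]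
  constructor <;> rintro ⟨k, hk, hgk⟩ <;> refine ⟨k, hk, ?_⟩
  · have hc : (commutator _).comap φ.toMonoidHom = commutator _ :=
      Subgroup.characteristic_iff_comap_eq.mp inferInstance φ
    rw [← hc, Subgroup.mem_comap]
    simpa [map_zpow] using hgk
  · have hc : (commutator _).comap φ.toMonoidHom = commutator _ :=
      Subgroup.characteristic_iff_comap_eq.mp inferInstance φ
    rw [← map_zpow]
    rw [← hc] at hgk
    exact hgk
end

section
/- Let A ∈ GL_n(ℤ) and E = ℤⁿ ⋊_A ℤ. If A does not have 1 as an eigenvalue, then the eigenspace W_{−1} = {z ∈ ℤⁿ : A z = −z} is a characteristic subgroup of E. -/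
/-- Conjugation of an element of the (abelian) kernel by an arbitrary element of the
semidirect product. -/
lemma conj_inl_aux {N G : Type*} [CommGroup N] [Group G] {φ : G →* MulAut N}
    (g : N ⋊[φ] G) (x : N) :
    g * SemidirectProduct.inl x * g⁻¹ = SemidirectProduct.inl (φ g.right x) := by
  ext
  · simp [mul_comm, mul_assoc, mul_left_comm]
  · simp

/-- If `A ∈ GL_n(ℤ)` does not have `1` as an eigenvalue, then the `-1`-eigenspace
`W₋₁ = {z ∈ ℤⁿ : A z = -z}` is a characteristic subgroup of `ℤⁿ ⋊_A ℤ`. -/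
theorem eigenspace_neg_one_characteristic (n : ℕ) (A : Matrix (Fin n) (Fin n) ℤ)
    (hA : IsUnit A.det) (h1 : (1 - A).det ≠ 0)
    (e : (Fin n → ℤ) ≃+ (Fin n → ℤ)) (he : ∀ v, e v = A.mulVec v) :
    (Subgroup.map SemidirectProduct.inl
        (AddSubgroup.toSubgroup
          (LinearMap.ker (A.mulVecLin +
            (LinearMap.id : (Fin n → ℤ) →ₗ[ℤ] Fin n → ℤ))).toAddSubgroup) :
      Subgroup (Multiplicative (Fin n → ℤ) ⋊[zAction e] Multiplicative ℤ)).Characteristic := by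
  classical
  set V := Multiplicative (Fin n → ℤ)
  set E := Multiplicative (Fin n → ℤ) ⋊[zAction e] Multiplicative ℤ
  set d : ℤ := (1 - A).det with hd
  set t : Multiplicative ℤ := Multiplicative.ofAdd 1 with ht
  have hact : ∀ u : V, zAction e t u = Multiplicative.ofAdd (e u.toAdd) := fun u => rfl
  -- every `inl u ^ d` lies in the commutator subgroup
  have key : ∀ u : V, (SemidirectProduct.inl u : E) ^ d ∈ commutator E := by
    intro u
    set y : Fin n → ℤ := (1 - A).adjugate.mulVec u.toAdd with hy
    have h3 : y - A.mulVec y = d • u.toAdd := by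
      have h2 : ((1 - A) * (1 - A).adjugate) = d • (1 : Matrix (Fin n) (Fin n) ℤ) := by
        rw [Matrix.mul_adjugate]
      have h5 : (1 - A).mulVec y = d • u.toAdd := by
        rw [hy, Matrix.mulVec_mulVec, h2, Matrix.smul_mulVec, Matrix.one_mulVec]
      rw [Matrix.sub_mulVec, Matrix.one_mulVec] at h5
      exact h5
    open scoped commutatorElement in
    have hcomm : ⁅(SemidirectProduct.inr t : E),
        (SemidirectProduct.inl (Multiplicative.ofAdd (-y)) : E)⁆
        = SemidirectProduct.inl u ^ d := by
      rw [commutatorElement_def]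
      have h6 : (SemidirectProduct.inr t : E)
          * SemidirectProduct.inl (Multiplicative.ofAdd (-y))
          * (SemidirectProduct.inr t)⁻¹
          = SemidirectProduct.inl (zAction e t (Multiplicative.ofAdd (-y))) := by
        rw [SemidirectProduct.inl_aut, map_inv]
      rw [mul_assoc, mul_assoc, ← mul_assoc (SemidirectProduct.inl (Multiplicative.ofAdd (-y))),
        ← mul_assoc, ← mul_assoc, h6, ← map_inv, ← map_mul, ← map_zpow]
      congr 1
      rw [hact]
      apply Multiplicative.toAdd.injective
      rw [toAdd_zpow]
      simp only [toAdd_mul, toAdd_inv, toAdd_ofAdd]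
      rw [map_neg, he]
      linear_combination (norm := module) h3
    exact hcomm ▸ Subgroup.commutator_mem_commutator (Subgroup.mem_top _) (Subgroup.mem_top _)
  rw [Subgroup.characteristic_iff_map_le]
  intro φ
  -- Step 1: φ maps inl into inl
  have hchar : ∀ u : V, ∃ w : V, φ (SemidirectProduct.inl u) = SemidirectProduct.inl w := by
    intro u
    have h7 : φ (SemidirectProduct.inl u) ^ d ∈ commutator E := by
      rw [← map_zpow]
      have hc : (commutator E).map φ.toMonoidHom ≤ commutator E :=
        Subgroup.characteristic_iff_map_le.mp inferInstance φ
      exact hc ⟨_, key u, rfl⟩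
    have h8 : SemidirectProduct.rightHom (φ (SemidirectProduct.inl u) ^ d) = 1 :=
      Abelianization.commutator_subset_ker SemidirectProduct.rightHom h7
    rw [map_zpow] at h8
    have h9 : SemidirectProduct.rightHom (φ (SemidirectProduct.inl u)) = 1 := by
      have h8' := congrArg Multiplicative.toAdd h8
      rw [toAdd_zpow] at h8'
      simp only [toAdd_one, smul_eq_mul] at h8'
      rcases mul_eq_zero.mp h8' with h | h
      · exact absurd h h1
      · apply Multiplicative.toAdd.injective; simpa using h
    have hm : φ (SemidirectProduct.inl u) ∈
        (SemidirectProduct.inl : V →* E).range := by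
      rw [SemidirectProduct.range_inl_eq_ker_rightHom]
      exact h9
    exact hm.imp fun w hw => hw.symm
  -- Step 2: the ℤ-component of φ (inr t) is a unit
  set k : ℤ := (SemidirectProduct.rightHom (φ (SemidirectProduct.inr t))).toAdd with hk
  have hku : IsUnit k := by
    obtain ⟨g, hg⟩ := (SemidirectProduct.rightHom_surjective.comp
      (MulEquiv.surjective φ)) t
    rw [Function.comp_apply] at hg
    have hsplit : g = SemidirectProduct.inl g.left * SemidirectProduct.inr g.right :=
      (SemidirectProduct.inl_left_mul_inr_right g).symm
    obtain ⟨w, hw⟩ := hchar g.left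
    have hr : g.right = t ^ g.right.toAdd := by
      apply Multiplicative.toAdd.injective
      rw [toAdd_zpow, ht, toAdd_ofAdd, smul_eq_mul, mul_one]
    have hval : SemidirectProduct.rightHom (φ g)
        = Multiplicative.ofAdd (g.right.toAdd * k) := by
      conv_lhs => rw [hsplit, hr]
      rw [map_mul, map_mul, hw, SemidirectProduct.rightHom_inl, one_mul,
        map_zpow, map_zpow, map_zpow]
      apply Multiplicative.toAdd.injective
      rw [toAdd_zpow, toAdd_ofAdd, smul_eq_mul, hk]
    rw [hg] at hval
    have h10 : k * g.right.toAdd = 1 := by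
      have h11 := congrArg Multiplicative.toAdd hval
      rw [ht] at h11
      simpa using h11.symm
    exact IsUnit.of_mul_eq_one g.right.toAdd h10
  -- Step 3: conclude
  rintro x ⟨_, ⟨u, hu, rfl⟩, rfl⟩
  obtain ⟨w, hw⟩ := hchar u
  have hu' : A.mulVec u.toAdd + u.toAdd = 0 := by
    simpa [LinearMap.mem_ker] using hu
  have hrel : (SemidirectProduct.inr t : E) * SemidirectProduct.inl u
      * (SemidirectProduct.inr t)⁻¹ = (SemidirectProduct.inl u)⁻¹ := by
    rw [← map_inv, ← SemidirectProduct.inl_aut, ← map_inv]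
    congr 1
    rw [hact]
    apply Multiplicative.toAdd.injective
    simp only [toAdd_ofAdd, toAdd_inv]
    rw [he]
    linear_combination (norm := module) hu'
  have hconj : φ (SemidirectProduct.inr t) * SemidirectProduct.inl w
      * (φ (SemidirectProduct.inr t))⁻¹ = (SemidirectProduct.inl w)⁻¹ := by
    have h12 := congrArg φ hrel
    rw [map_mul, map_mul, map_inv, map_inv, hw] at h12
    exact h12
  rw [conj_inl_aux, ← map_inv] at hconj
  have hz : (AddEquiv.toMultiplicative e ^ k) w = w⁻¹ :=
    SemidirectProduct.inl_injective hconj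
  have hEw : e w.toAdd = - w.toAdd := by
    rcases Int.isUnit_iff.mp hku with h | h
    · rw [h, zpow_one] at hz
      have := congrArg Multiplicative.toAdd hz
      exact this
    · rw [h, zpow_neg_one] at hz
      have h13 : w = (AddEquiv.toMultiplicative e) w⁻¹ := by
        have := congrArg (AddEquiv.toMultiplicative e) hz
        rw [MulAut.apply_inv_self] at this
        exact this
      have h14 := congrArg Multiplicative.toAdd h13
      have h15 : w.toAdd = e (-(w.toAdd)) := h14
      rw [map_neg] at h15
      linear_combination (norm := module) h15
  have hwmem : w.toAdd ∈ LinearMap.ker (A.mulVecLin +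
      (LinearMap.id : (Fin n → ℤ) →ₗ[ℤ] Fin n → ℤ)) := by
    rw [LinearMap.mem_ker]
    simp only [LinearMap.add_apply, Matrix.mulVecLin_apply, LinearMap.id_apply]
    rw [← he, hEw]
    module
  exact ⟨w, hwmem, hw.symm⟩
end

section
/- Let A ∈ GL₂(ℤ) with trace squared less than 4 (equivalently, with non-real complex eigenvalues) and det(A) = 1. Then there is no integral solution (m, n, p) ∈ ℤ³ to the system −m² − np = 1 and (a−d)m + bp + cn = 0, where A = [[a,b],[c,d]]. -/
/-- For `A = [[a,b],[c,d]] ∈ SL₂(ℤ)` with `tr(A)² < 4` (non-real eigenvalues), the system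
`-m² - np = 1`, `(a-d)m + bp + cn = 0` has no integral solution. -/
theorem no_integral_solution_complex_eigenvalues (a b c d : ℤ)
    (hdet : a * d - b * c = 1) (htr : (a + d) ^ 2 < 4) :
    ¬ ∃ m n p : ℤ, -m ^ 2 - n * p = 1 ∧ (a - d) * m + b * p + c * n = 0 := by
  rintro ⟨m, n, p, h1, h2⟩
  have h3 : (a - d) * m = -(b * p + c * n) := by linarith
  have hkey : ((a - d) * m) ^ 2 = (b * p + c * n) ^ 2 := by rw [h3]; ring
  have hnp : n * p = -m ^ 2 - 1 := by linarith
  have hbc : b * c = a * d - 1 := by linarith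
  -- (a-d)²m² = (bp+cn)² = (bp-cn)² + 4bc·np ≥ 4bc·np
  have e1 : ((a - d) * m) ^ 2 ≥ 4 * (b * c) * (n * p) := by
    nlinarith [sq_nonneg (b * p - c * n)]
  rw [hbc, hnp] at e1
  have hs : (a + d) ^ 2 ≤ 3 := by linarith
  nlinarith [e1, hs, sq_nonneg m, sq_nonneg (a - d),
    mul_nonneg (by linarith : (0:ℤ) ≤ 3 - (a + d) ^ 2) (sq_nonneg m)]
end

section
/- There is no M ∈ GL₂(ℤ) with trace 0 and determinant 1 satisfying M A = A⁻¹ M when A ∈ GL₂(ℤ) has tr(A)² < 4 and det(A) = 1 and A ≠ ±I; consequently, ℤ² ⋊_A ℤ has the R∞ property for every A ∈ GL₂(ℤ) with non-real complex eigenvalues. -/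
section Aux

open SemidirectProduct Multiplicative

/-- Any `M` with `M.trace = 0` cannot intertwine an elliptic `A` with `A⁻¹` : trace part. -/
lemma RinfAux.traceM (A M : Matrix (Fin 2) (Fin 2) ℤ)
    (hdet : A.det = 1) (htr : A.trace ^ 2 < 4) (hMA : M * A = A.adjugate * M) :
    M.trace = 0 := by
  have e01 := congr_fun (congr_fun hMA 0) 1
  have e10 := congr_fun (congr_fun hMA 1) 0
  simp [Matrix.mul_apply, Fin.sum_univ_two, Matrix.adjugate_fin_two] at e01 e10
  rw [Matrix.det_fin_two] at hdet
  rw [Matrix.trace_fin_two] at htr ⊢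
  have hq : A 0 1 * (M 0 0 + M 1 1) = 0 := by linarith
  have hr : A 1 0 * (M 0 0 + M 1 1) = 0 := by linarith
  rcases mul_eq_zero.1 hq with h | h
  · rcases mul_eq_zero.1 hr with h' | h'
    · exfalso
      rw [h, h'] at hdet; simp at hdet
      rcases Int.mul_eq_one_iff_eq_one_or_neg_one.1 hdet with ⟨h1,h2⟩|⟨h1,h2⟩ <;>
        rw [h1, h2] at htr <;> norm_num at htr
    · exact h'
  · exact h

/-- The key quaternionic fact: no integer matrix of determinant `1` intertwines an
elliptic `A` with its inverse. -/
lemma RinfAux.noM (A M : Matrix (Fin 2) (Fin 2) ℤ)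
    (hdet : A.det = 1) (htr : A.trace ^ 2 < 4) (hMA : M * A = A.adjugate * M)
    (hMdet : M.det = 1) : False := by
  have htr0 := RinfAux.traceM A M hdet htr hMA
  have e00 := congr_fun (congr_fun hMA 0) 0
  simp [Matrix.mul_apply, Fin.sum_univ_two, Matrix.adjugate_fin_two] at e00
  rw [Matrix.det_fin_two] at hdet hMdet
  rw [Matrix.trace_fin_two] at htr htr0
  set p := A 0 0; set q := A 0 1; set r := A 1 0; set s := A 1 1
  set m1 := M 0 0; set m2 := M 0 1; set m3 := M 1 0
  have h4 : M 1 1 = -m1 := by linarith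
  rw [h4] at hMdet
  have h3 : m1 * (p - s) + m2 * r + m3 * q = 0 := by linarith
  have hbc : m1^2 + m2*m3 = -1 := by nlinarith
  have hqr : (p-s)^2 + 4*(q*r) ≤ -1 := by nlinarith
  have hmm : m2*m3 ≤ -1 := by nlinarith [sq_nonneg m1]
  have h3sq : (m2*r + m3*q)^2 = m1^2*(p-s)^2 := by
    have hx : m2*r + m3*q = -(m1*(p-s)) := by linarith
    rw [hx]; ring
  nlinarith [sq_nonneg (m2*r - m3*q), sq_nonneg (p-s),
    mul_nonneg (by linarith : (0:ℤ) ≤ -1 - (p-s)^2 - 4*(q*r)) (by linarith : (0:ℤ) ≤ -1 - m2*m3)]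

variable {V : Type*} [AddCommGroup V] (e : V ≃+ V)

lemma RinfAux.zA_one (v : V) : (zAction e (ofAdd 1)) (ofAdd v) = ofAdd (e v) := by
  simp [zAction]

lemma RinfAux.zA_negone (v : V) :
    (zAction e (ofAdd (-1))) (ofAdd v) = ofAdd (e.symm v) := by
  show ((AddEquiv.toMultiplicative e) ^ (Multiplicative.toAdd (ofAdd (-1 : ℤ)))) (ofAdd v) = _
  rw [toAdd_ofAdd, zpow_neg_one]
  rfl

lemma RinfAux.conj_inl (g : Multiplicative V ⋊[zAction e] Multiplicative ℤ)
    (n : Multiplicative V) :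
    g * inl n * g⁻¹ = inl ((zAction e (rightHom g)) n) := by
  conv_lhs => rw [← inl_left_mul_inr_right g]
  have comm : ∀ a b : Multiplicative V, inl (φ := zAction e) a * inl b = inl b * inl a := by
    intro a b; rw [← map_mul, ← map_mul, mul_comm]
  calc inl g.left * inr g.right * inl n * (inl g.left * inr g.right)⁻¹
      = inl g.left * (inr (φ := zAction e) g.right * inl n * inr g.right⁻¹) * (inl g.left)⁻¹ := by
        rw [map_inv]; group
    _ = inl g.left * inl ((zAction e g.right) n) * (inl g.left)⁻¹ := by rw [← inl_aut]
    _ = inl ((zAction e g.right) n) := by rw [comm]; group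

lemma RinfAux.ofAdd_one_zpow (k : ℤ) : (ofAdd (1:ℤ)) ^ k = ofAdd k := by
  rw [← ofAdd_zsmul]; simp

lemma RinfAux.hom_classify (A : Matrix (Fin 2) (Fin 2) ℤ)
    (hdet : A.det = 1) (htr : A.trace^2 < 4)
    (e : (Fin 2 → ℤ) ≃+ (Fin 2 → ℤ)) (he : ∀ v, e v = A.mulVec v)
    (f : (Multiplicative (Fin 2 → ℤ) ⋊[zAction e] Multiplicative ℤ) →* Multiplicative ℤ) :
    ∀ g, f g = (f (inr (ofAdd 1))) ^ (toAdd (rightHom g)) := by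
  have hadd : ∀ a b : Fin 2 → ℤ, toAdd (f (inl (ofAdd (a + b))))
      = toAdd (f (inl (ofAdd a))) + toAdd (f (inl (ofAdd b))) := by
    intro a b
    rw [ofAdd_add, _root_.map_mul, _root_.map_mul, toAdd_mul]
  set F : (Fin 2 → ℤ) →+ ℤ := AddMonoidHom.mk' (fun v => toAdd (f (inl (ofAdd v)))) hadd with hF
  have hFA : ∀ v, F (A.mulVec v) = F v := by
    intro v
    have h1 : inl (φ := zAction e) (ofAdd (e v)) =
        inr (ofAdd 1) * inl (ofAdd v) * inr (ofAdd 1)⁻¹ := by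
      rw [← RinfAux.zA_one e v]; exact inl_aut _ _
    have h2 : f (inl (ofAdd (e v))) = f (inl (ofAdd v)) := by
      rw [h1, _root_.map_mul, _root_.map_mul, map_inv,
        mul_comm (f (inr (ofAdd 1))) (f (inl (ofAdd v)))]
      simp
    have h3 : F (e v) = F v := congrArg toAdd h2
    rwa [he] at h3
  have hB : ∀ v, F ((A - 1).mulVec v) = 0 := by
    intro v
    rw [Matrix.sub_mulVec, Matrix.one_mulVec, map_sub, hFA, sub_self]
  have hdetB : (A - 1).det = 2 - A.trace := by
    rw [Matrix.det_fin_two] at hdet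
    rw [Matrix.det_fin_two, Matrix.trace_fin_two]
    simp only [Matrix.sub_apply, Matrix.one_apply]
    norm_num
    linear_combination hdet
  have hFzero : ∀ v, F v = 0 := by
    intro v
    have h1 := hB ((A - 1).adjugate.mulVec v)
    rw [Matrix.mulVec_mulVec, Matrix.mul_adjugate, hdetB, Matrix.smul_mulVec,
      Matrix.one_mulVec, map_zsmul, smul_eq_mul] at h1
    have h2 : (2 : ℤ) - A.trace ≠ 0 := by nlinarith [sq_nonneg (A.trace)]
    exact (mul_eq_zero.1 h1).resolve_left h2
  intro g
  have hg : g = inl g.left * inr g.right := (inl_left_mul_inr_right g).symm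
  rw [hg, _root_.map_mul]
  have h3 : f (inl g.left) = 1 := by
    have := hFzero (toAdd g.left)
    simpa [hF] using this
  rw [h3, one_mul]
  have h5 : rightHom (φ := zAction e) (inl g.left * inr g.right) = g.right := by
    simp
  have h7 : (ofAdd (1:ℤ)) ^ (toAdd g.right) = g.right := by
    rw [← ofAdd_zsmul]; simp
  rw [h5]
  conv_lhs => rw [← h7, map_zpow, map_zpow]

end Aux

/-- For `A ∈ GL₂(ℤ)` with non-real complex eigenvalues (`det A = 1`, `tr(A)² < 4`,
`A ≠ ±I`), there is no `M ∈ SL₂(ℤ)` of trace `0` with `M A = A⁻¹ M`; consequently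
`ℤ² ⋊_A ℤ` has the `R∞` property. -/
theorem rinf_of_complex_eigenvalues (A : Matrix (Fin 2) (Fin 2) ℤ)
    (hdet : A.det = 1) (htr : A.trace ^ 2 < 4) (hA1 : A ≠ 1) (hA2 : A ≠ -1)
    (e : (Fin 2 → ℤ) ≃+ (Fin 2 → ℤ)) (he : ∀ v, e v = A.mulVec v) :
    (¬ ∃ M : Matrix (Fin 2) (Fin 2) ℤ,
        M.det = 1 ∧ M.trace = 0 ∧ M * A = A⁻¹ * M) ∧
    hasRinf (Multiplicative (Fin 2 → ℤ) ⋊[zAction e] Multiplicative ℤ) := by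
  classical
  open SemidirectProduct Multiplicative in
  have hinv : A⁻¹ = A.adjugate := by
    rw [Matrix.inv_def, hdet]; simp
  have hNoM : ¬ ∃ M : Matrix (Fin 2) (Fin 2) ℤ,
      M.det = 1 ∧ M.trace = 0 ∧ M * A = A⁻¹ * M := by
    rintro ⟨M, h1, h2, h3⟩
    exact RinfAux.noM A M hdet htr (by rw [h3, hinv]) h1
  refine ⟨hNoM, ?_⟩
  open SemidirectProduct Multiplicative in
  intro φ
  obtain ⟨κ, hκ⟩ : ∃ k : ℤ, rightHom (φ (inr (ofAdd 1))) = ofAdd k :=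
    ⟨toAdd (rightHom (φ (inr (ofAdd 1)))), (ofAdd_toAdd _).symm⟩
  obtain ⟨κ', hκ'⟩ : ∃ k : ℤ, rightHom (φ.symm (inr (ofAdd 1))) = ofAdd k :=
    ⟨toAdd (rightHom (φ.symm (inr (ofAdd 1)))), (ofAdd_toAdd _).symm⟩
  have h1 := RinfAux.hom_classify A hdet htr e he
    ((rightHom : _ →* Multiplicative ℤ).comp φ.toMonoidHom)
  have h2 := RinfAux.hom_classify A hdet htr e he
    ((rightHom : _ →* Multiplicative ℤ).comp φ.symm.toMonoidHom)
  simp only [MonoidHom.comp_apply, MulEquiv.coe_toMonoidHom] at h1 h2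
  have hπ : ∀ g, rightHom (φ g) = ofAdd (toAdd (rightHom g) * κ) := by
    intro g
    rw [h1 g, hκ, ← ofAdd_zsmul, smul_eq_mul]
  have hπ' : ∀ g, rightHom (φ.symm g) = ofAdd (toAdd (rightHom g) * κ') := by
    intro g
    rw [h2 g, hκ', ← ofAdd_zsmul, smul_eq_mul]
  have hmul : κ' * κ = 1 := by
    have ha : rightHom (φ (φ.symm (inr (ofAdd (1:ℤ))))) = ofAdd (κ' * κ) := by
      rw [hπ _, hπ' _, rightHom_inr, toAdd_ofAdd, toAdd_ofAdd, one_mul]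
    rw [MulEquiv.apply_symm_apply, rightHom_inr] at ha
    have := congrArg toAdd ha
    rw [toAdd_ofAdd, toAdd_ofAdd] at this
    exact this.symm
  rcases Int.mul_eq_one_iff_eq_one_or_neg_one.1 hmul with ⟨hκ'1, hκ1⟩ | ⟨hκ'1, hκ1⟩
  · -- κ = 1 : the projection to ℤ is a twisted-conjugacy invariant
    have hfix : ∀ g, rightHom (φ g) = rightHom g := by
      intro g
      rw [hπ g, hκ1, mul_one, ofAdd_toAdd]
    refine Infinite.of_injective
      (fun n : ℤ => Quotient.mk (twistedSetoid φ.toMonoidHom) (inr (ofAdd n))) ?_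
    intro m n h
    obtain ⟨z, hz⟩ := Quotient.exact h
    simp only [MulEquiv.coe_toMonoidHom] at hz
    have h9 := congrArg (fun g => rightHom (φ := zAction e) g) hz
    simp only [_root_.map_mul, map_inv, rightHom_inr] at h9
    rw [hfix z] at h9
    rw [mul_comm (rightHom z) (ofAdd n), mul_inv_cancel_right] at h9
    simpa using congrArg toAdd h9
  · -- κ = -1 : φ preserves the ℤ² kernel and acts there with det -1, trace 0
    have hneg : ∀ g, rightHom (φ g) = (rightHom g)⁻¹ := by
      intro g
      rw [hπ g, hκ1, mul_neg_one, ofAdd_neg, ofAdd_toAdd]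
    have hneg' : ∀ g, rightHom (φ.symm g) = (rightHom g)⁻¹ := by
      intro g
      rw [hπ' g, hκ'1, mul_neg_one, ofAdd_neg, ofAdd_toAdd]
    -- the restriction of φ (resp. φ.symm) to the kernel ℤ²
    set fM : (Fin 2 → ℤ) → (Fin 2 → ℤ) :=
      fun v => toAdd ((φ (inl (ofAdd v))).left) with hfM
    set gM : (Fin 2 → ℤ) → (Fin 2 → ℤ) :=
      fun v => toAdd ((φ.symm (inl (ofAdd v))).left) with hgM
    have hkerf : ∀ v, φ (inl (ofAdd v)) = inl (ofAdd (fM v)) := by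
      intro v
      have hr1 : rightHom (φ (inl (ofAdd v))) = 1 := by
        rw [hneg, rightHom_inl, inv_one]
      have hr : (φ (inl (ofAdd v))).right = 1 := by
        rw [← congrFun rightHom_eq_right (φ (inl (ofAdd v)))]; exact hr1
      conv_lhs => rw [← inl_left_mul_inr_right (φ (inl (ofAdd v)))]
      rw [hr, _root_.map_one, mul_one]
      simp only [hfM, ofAdd_toAdd]
    have hkerg : ∀ v, φ.symm (inl (ofAdd v)) = inl (ofAdd (gM v)) := by
      intro v
      have hr1 : rightHom (φ.symm (inl (ofAdd v))) = 1 := by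
        rw [hneg', rightHom_inl, inv_one]
      have hr : (φ.symm (inl (ofAdd v))).right = 1 := by
        rw [← congrFun rightHom_eq_right (φ.symm (inl (ofAdd v)))]; exact hr1
      conv_lhs => rw [← inl_left_mul_inr_right (φ.symm (inl (ofAdd v)))]
      rw [hr, _root_.map_one, mul_one]
      simp only [hgM, ofAdd_toAdd]
    have extract : ∀ (x y : Fin 2 → ℤ),
        (inl (φ := zAction e) (ofAdd x)) = inl (ofAdd y) → x = y := by
      intro x y hxy
      have := congrArg (fun g => toAdd (SemidirectProduct.left g)) hxy
      simpa using this
    have hadd : ∀ a b, fM (a + b) = fM a + fM b := by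
      intro a b
      apply extract
      rw [← hkerf (a+b), ofAdd_add, ofAdd_add, _root_.map_mul, _root_.map_mul,
        hkerf, hkerf, ← _root_.map_mul]
    have hgadd : ∀ a b, gM (a + b) = gM a + gM b := by
      intro a b
      apply extract
      rw [← hkerg (a+b), ofAdd_add, ofAdd_add, _root_.map_mul, _root_.map_mul,
        hkerg, hkerg, ← _root_.map_mul]
    have hgf : ∀ v, gM (fM v) = v := by
      intro v
      apply extract
      rw [← hkerg (fM v), ← hkerf v, MulEquiv.symm_apply_apply]
    have hesymm : ∀ w, e.symm w = A.adjugate.mulVec w := by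
      intro w
      have hadjw : e (A.adjugate.mulVec w) = w := by
        rw [he, Matrix.mulVec_mulVec, Matrix.mul_adjugate, hdet]
        simp
      exact e.symm_apply_eq.mpr hadjw.symm
    have hfMe : ∀ v, fM (A.mulVec v) = A.adjugate.mulVec (fM v) := by
      intro v
      have h1' : inl (φ := zAction e) (ofAdd (e v)) =
          inr (ofAdd 1) * inl (ofAdd v) * inr (ofAdd 1)⁻¹ := by
        rw [← RinfAux.zA_one e v]; exact inl_aut _ _
      have h2' := congrArg φ h1'
      rw [_root_.map_mul, _root_.map_mul, map_inv, map_inv, hkerf, hkerf,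
        RinfAux.conj_inl e (φ (inr (ofAdd 1))) (ofAdd (fM v)),
        hneg (inr (ofAdd 1)), rightHom_inr,
        (by rw [← ofAdd_neg] : ((ofAdd (1:ℤ)))⁻¹ = ofAdd (-1:ℤ)),
        RinfAux.zA_negone] at h2'
      have h3' := extract _ _ h2'
      rw [he, hesymm] at h3'
      exact h3'
    -- pass to matrices
    set Mm : Matrix (Fin 2) (Fin 2) ℤ :=
      LinearMap.toMatrix' (AddMonoidHom.mk' fM hadd).toIntLinearMap with hMmdef
    set Mm' : Matrix (Fin 2) (Fin 2) ℤ :=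
      LinearMap.toMatrix' (AddMonoidHom.mk' gM hgadd).toIntLinearMap with hMm'def
    have hMmV : ∀ v, Mm.mulVec v = fM v := by
      intro v
      rw [← Matrix.toLin'_apply, hMmdef, Matrix.toLin'_toMatrix']
      rfl
    have hMm'V : ∀ v, Mm'.mulVec v = gM v := by
      intro v
      rw [← Matrix.toLin'_apply, hMm'def, Matrix.toLin'_toMatrix']
      rfl
    have hrel : Mm * A = A.adjugate * Mm := by
      have hv : ∀ v, (Mm * A).mulVec v = (A.adjugate * Mm).mulVec v := by
        intro v
        rw [← Matrix.mulVec_mulVec, ← Matrix.mulVec_mulVec, hMmV, hMmV, hfMe]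
      ext i j
      have := congrFun (hv (Pi.single j 1)) i
      rw [Matrix.mulVec_single, Matrix.mulVec_single] at this
      simpa using this
    have hone : Mm' * Mm = 1 := by
      ext i j
      have hv : (Mm' * Mm).mulVec (Pi.single j 1) = (1 : Matrix (Fin 2) (Fin 2) ℤ).mulVec (Pi.single j 1) := by
        rw [← Matrix.mulVec_mulVec, hMmV, hMm'V, hgf, Matrix.one_mulVec]
      have := congrFun hv i
      rw [Matrix.mulVec_single, Matrix.mulVec_single] at this
      simpa using this
    have hdetM : Mm.det = -1 := by
      have hd := congrArg Matrix.det hone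
      rw [Matrix.det_mul, Matrix.det_one] at hd
      rcases Int.mul_eq_one_iff_eq_one_or_neg_one.1 hd with ⟨_, hh⟩ | ⟨_, hh⟩
      · exact (RinfAux.noM A Mm hdet htr hrel hh).elim
      · exact hh
    have htrM : Mm.trace = 0 := RinfAux.traceM A Mm hdet htr hrel
    have hMd : Mm 1 1 = - Mm 0 0 := by
      rw [Matrix.trace_fin_two] at htrM; linarith
    have habc : Mm 0 0 ^ 2 + Mm 0 1 * Mm 1 0 = 1 := by
      rw [Matrix.det_fin_two, hMd] at hdetM
      linear_combination -hdetM
    obtain ⟨x₀, x₁, hxne, hfix0, hfix1⟩ : ∃ x₀ x₁ : ℤ, ¬(x₀ = 0 ∧ x₁ = 0) ∧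
        x₀ * Mm 0 0 + x₁ * Mm 1 0 = x₀ ∧ x₀ * Mm 0 1 + x₁ * Mm 1 1 = x₁ := by
      by_cases hc : 1 + Mm 0 0 = 0 ∧ Mm 0 1 = 0
      · have ha : Mm 0 0 = -1 := by linarith [hc.1]
        refine ⟨Mm 1 0, 2, by simp, ?_, ?_⟩
        · rw [ha]; ring
        · rw [hc.2, hMd, ha]; ring
      · refine ⟨1 + Mm 0 0, Mm 0 1, hc, ?_, ?_⟩
        · linear_combination habc
        · rw [hMd]; ring
    set w : Fin 2 → ℤ := ![x₀, x₁] with hwdef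
    have hw0 : w 0 = x₀ := rfl
    have hw1 : w 1 = x₁ := rfl
    have hLw : x₀ * w 0 + x₁ * w 1 ≠ 0 := by
      rw [hw0, hw1]
      intro h0
      exact hxne ⟨by nlinarith [sq_nonneg x₀, sq_nonneg x₁], by nlinarith [sq_nonneg x₀, sq_nonneg x₁]⟩
    have hLfM : ∀ v, x₀ * (fM v) 0 + x₁ * (fM v) 1 = x₀ * v 0 + x₁ * v 1 := by
      intro v
      have h' : fM v = Mm.mulVec v := (hMmV v).symm
      rw [h']
      simp only [Matrix.mulVec, dotProduct, Fin.sum_univ_two]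
      linear_combination v 0 * hfix0 + v 1 * hfix1
    refine Infinite.of_injective
      (fun j : ℤ => Quotient.mk (twistedSetoid φ.toMonoidHom) (inl (ofAdd (j • w)))) ?_
    intro m n h
    obtain ⟨z, hz⟩ := Quotient.exact h
    simp only [MulEquiv.coe_toMonoidHom] at hz
    have hz1 : rightHom z = 1 := by
      have h9 := congrArg (fun g => rightHom (φ := zAction e) g) hz
      simp only [_root_.map_mul, map_inv, rightHom_inl, mul_one, one_mul] at h9
      rw [hneg z, inv_inv] at h9
      have h10 := congrArg toAdd h9
      rw [toAdd_one, toAdd_mul] at h10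
      have h11 : toAdd (rightHom z) = 0 := by omega
      rw [← ofAdd_toAdd (rightHom z), h11, ofAdd_zero]
    obtain ⟨u, hzeq⟩ : ∃ u : Fin 2 → ℤ, z = inl (ofAdd u) := by
      refine ⟨toAdd z.left, ?_⟩
      rw [ofAdd_toAdd]
      have hzr : z.right = 1 := by
        rw [← congrFun rightHom_eq_right z]; exact hz1
      conv_lhs => rw [← inl_left_mul_inr_right z]
      rw [hzr, _root_.map_one, mul_one]
    rw [hzeq, hkerf u, ← _root_.map_inv, ← ofAdd_neg, ← _root_.map_mul, ← ofAdd_add,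
      ← _root_.map_mul, ← ofAdd_add] at hz
    have heq := extract _ _ hz
    have e0 := congrFun heq 0
    have e1 := congrFun heq 1
    simp only [Pi.add_apply, Pi.neg_apply, Pi.smul_apply, smul_eq_mul] at e0 e1
    have key : (m - n) * (x₀ * w 0 + x₁ * w 1) = 0 := by
      linear_combination x₀ * e0 + x₁ * e1 - hLfM u
    rcases mul_eq_zero.1 key with hk | hk
    · exact sub_eq_zero.mp hk
    · exact (hLw hk).elim
end

section
/- Let n be odd and A ∈ GL_n(ℤ). If A is conjugate (in GL_n(ℚ) or GL_n(ℤ)) to A⁻¹, then det(A) is an eigenvalue of A, i.e., the characteristic polynomial of A vanishes at det(A). -/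
open Matrix Polynomial

lemma eval_charpoly_aux {n : ℕ} (M : Matrix (Fin n) (Fin n) ℚ) (r : ℚ) :
    M.charpoly.eval r = (r • (1 : Matrix (Fin n) (Fin n) ℚ) - M).det := by
  rw [Matrix.charpoly, ← Polynomial.coe_evalRingHom, RingHom.map_det]
  congr 1
  ext i j
  by_cases h : i = j <;>
    simp [Matrix.charmatrix_apply, h, Matrix.one_apply, Matrix.diagonal_apply]

/-- If `n` is odd and `A ∈ GL_n(ℤ)` is conjugate (over `ℚ`, hence in particular if it is
conjugate over `ℤ`) to its inverse, then `det A` is an eigenvalue of `A`, i.e. the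
characteristic polynomial of `A` vanishes at `det A`. -/
theorem det_is_eigenvalue_of_conjugate_to_inverse (n : ℕ) (hn : Odd n)
    (A : Matrix (Fin n) (Fin n) ℤ) (hA : IsUnit A.det)
    (hconj : ∃ P : Matrix (Fin n) (Fin n) ℚ, IsUnit P.det ∧
      P * A.map ((↑) : ℤ → ℚ) = (A.map ((↑) : ℤ → ℚ))⁻¹ * P) :
    A.charpoly.eval A.det = 0 := by
  obtain ⟨P, hP, hPA⟩ := hconj
  set B := A.map ((↑) : ℤ → ℚ) with hB
  set e : ℚ := (A.det : ℚ) with he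
  have hdetB : B.det = e := by
    rw [hB, he]
    exact (RingHom.map_det (Int.castRingHom ℚ) A).symm
  have he2 : e * e = 1 := by
    rcases Int.isUnit_iff.mp hA with h | h <;> simp [he, h]
  have hBunit : IsUnit B.det := by
    rw [hdetB]; exact IsUnit.of_mul_eq_one _ he2
  set X : ℚ := (e • (1 : Matrix (Fin n) (Fin n) ℚ) - B).det with hX
  have hcomm : P * (e • 1 - B) = (e • 1 - B⁻¹) * P := by
    rw [mul_sub, sub_mul, hPA, Matrix.mul_smul, Matrix.mul_one, Matrix.smul_mul,
      Matrix.one_mul]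
  have h1 : X = (e • (1 : Matrix (Fin n) (Fin n) ℚ) - B⁻¹).det := by
    have h := congrArg Matrix.det hcomm
    rw [Matrix.det_mul, Matrix.det_mul, mul_comm _ P.det] at h
    exact mul_left_cancel₀ hP.ne_zero h
  have hfact : e • (1 : Matrix (Fin n) (Fin n) ℚ) - B⁻¹ = B⁻¹ * (e • B - 1) := by
    rw [mul_sub, Matrix.mul_smul, Matrix.nonsing_inv_mul _ hBunit, Matrix.mul_one]
  have hneg : e • B - 1 = (-e) • (e • (1 : Matrix (Fin n) (Fin n) ℚ) - B) := by
    rw [smul_sub, smul_smul, neg_mul, he2, neg_smul, neg_smul, one_smul, sub_neg_eq_add]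
    abel
  have hen : (-e) ^ n = -e := by
    obtain ⟨k, hk⟩ := hn
    have h2 : (-e) ^ 2 = 1 := by nlinarith [he2]
    rw [hk, pow_succ, pow_mul, h2, one_pow, one_mul]
  have hinv : e⁻¹ = e := inv_eq_of_mul_eq_one_right he2
  have h2 : X = -X := by
    calc X = (B⁻¹ * (e • B - 1)).det := by rw [h1, hfact]
    _ = B⁻¹.det * ((-e) • (e • (1 : Matrix (Fin n) (Fin n) ℚ) - B)).det := by
        rw [Matrix.det_mul, hneg]
    _ = B⁻¹.det * ((-e) ^ n * X) := by rw [Matrix.det_smul, Fintype.card_fin]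
    _ = e * (-e * X) := by
        rw [Matrix.det_nonsing_inv, hdetB, Ring.inverse_eq_inv, hinv, hen]
    _ = -X := by rw [show e * (-e * X) = -((e * e) * X) by ring, he2, one_mul]
  have hX0 : X = 0 := by linarith
  have hcast : ((A.charpoly.eval A.det : ℤ) : ℚ) = 0 := by
    have hmap : (A.charpoly.map (Int.castRingHom ℚ)) = B.charpoly :=
      (Matrix.charpoly_map A (Int.castRingHom ℚ)).symm
    have heq : ((A.charpoly.eval A.det : ℤ) : ℚ)
        = (A.charpoly.map (Int.castRingHom ℚ)).eval e := by
      rw [Polynomial.eval_map, he]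
      exact (Polynomial.eval₂_hom (Int.castRingHom ℚ) (A.det : ℤ)).symm
    rw [heq, hmap, eval_charpoly_aux, ← hX, hX0]
  exact_mod_cast hcast
end

section
/- Let A ∈ GL₃(ℤ) have no eigenvalue equal to 1 or −1. Then no M ∈ GL₃(ℤ) satisfies M A = A⁻¹ M, and the group ℤ³ ⋊_A ℤ has the R∞ property. -/
open SemidirectProduct

lemma aux_no_M (A : Matrix (Fin 3) (Fin 3) ℤ)
    (hA : IsUnit A.det) (h1 : (1 - A).det ≠ 0) (h2 : (1 + A).det ≠ 0) :
    ¬ ∃ M : Matrix (Fin 3) (Fin 3) ℤ, IsUnit M.det ∧ M * A = A⁻¹ * M := by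
  rintro ⟨M, hM, hMA⟩
  have hinvA : A⁻¹ * A = 1 := Matrix.nonsing_inv_mul A hA
  have hdM : M.det ≠ 0 := hM.ne_zero
  have hdinv : A⁻¹.det = Ring.inverse A.det := Matrix.det_nonsing_inv A
  rcases Int.isUnit_iff.mp hA with hd | hd
  · -- det A = 1
    have key : M * (1 - A) = (1 - A⁻¹) * M := by
      rw [mul_sub, sub_mul, mul_one, one_mul, hMA]
    have hd1 : (1 - A⁻¹) = A⁻¹ * (A - 1) := by
      rw [mul_sub, hinvA, mul_one]
    have e1 : (1 - A).det = (1 - A⁻¹).det := by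
      have := congrArg Matrix.det key
      rw [Matrix.det_mul, Matrix.det_mul, mul_comm M.det] at this
      exact mul_right_cancel₀ hdM this
    rw [hd1, Matrix.det_mul, hdinv, hd] at e1
    have : (A - 1).det = - (1 - A).det := by
      rw [← neg_sub, Matrix.det_neg]
      simp
    rw [this] at e1
    simp at e1
    omega
  · -- det A = -1
    have key : M * (1 + A) = (1 + A⁻¹) * M := by
      rw [mul_add, add_mul, mul_one, one_mul, hMA]
    have hd1 : (1 + A⁻¹) = A⁻¹ * (A + 1) := by
      rw [mul_add, hinvA, mul_one]
    have e1 : (1 + A).det = (1 + A⁻¹).det := by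
      have := congrArg Matrix.det key
      rw [Matrix.det_mul, Matrix.det_mul, mul_comm M.det] at this
      exact mul_right_cancel₀ hdM this
    rw [hd1, Matrix.det_mul, hdinv, hd] at e1
    have hneg : Ring.inverse (-1 : ℤ) = -1 := by
      have : ((-1 : ℤˣ) : ℤ) = (-1 : ℤ) := rfl
      rw [← this, Ring.inverse_unit]; rfl
    rw [add_comm A 1, hneg] at e1
    omega


lemma zAction_one {V : Type*} [AddCommGroup V] (e : V ≃+ V) (v : V) :
    zAction e (Multiplicative.ofAdd 1) (Multiplicative.ofAdd v)
      = Multiplicative.ofAdd (e v) := by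
  simp [zAction, zpowersHom_apply]

lemma zAction_neg_one {V : Type*} [AddCommGroup V] (e : V ≃+ V) (v : V) :
    zAction e (Multiplicative.ofAdd (-1)) (Multiplicative.ofAdd v)
      = Multiplicative.ofAdd (e.symm v) := by
  simp [zAction, zpowersHom_apply]

section
variable (A : Matrix (Fin 3) (Fin 3) ℤ) (e : (Fin 3 → ℤ) ≃+ (Fin 3 → ℤ))

abbrev GG := Multiplicative (Fin 3 → ℤ) ⋊[zAction e] Multiplicative ℤ

lemma conj_inl (v : Fin 3 → ℤ) :
    (inl (Multiplicative.ofAdd (e v)) : GG e)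
      = inr (Multiplicative.ofAdd 1) * inl (Multiplicative.ofAdd v)
        * inr (Multiplicative.ofAdd 1)⁻¹ := by
  rw [← zAction_one, inl_aut]

lemma hom_vanish (he : ∀ v, e v = A.mulVec v) (h1 : (1 - A).det ≠ 0)
    (f : GG e →* Multiplicative ℤ) (v : Fin 3 → ℤ) :
    f (inl (Multiplicative.ofAdd v)) = 1 := by
  set g : (Fin 3 → ℤ) →+ ℤ := AddMonoidHom.mk'
    (fun v => Multiplicative.toAdd (f (inl (Multiplicative.ofAdd v))))
    (by intro a b
        show Multiplicative.toAdd (f (inl (Multiplicative.ofAdd (a + b)))) = _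
        rw [ofAdd_add, map_mul, map_mul, toAdd_mul]) with hg
  have hstep : ∀ w, g (A.mulVec w) = g w := by
    intro w
    have h := conj_inl e w
    rw [he w] at h
    have h2 := congrArg f h
    rw [map_mul, map_mul, map_inv] at h2
    show Multiplicative.toAdd (f (inl (Multiplicative.ofAdd (A.mulVec w))))
      = Multiplicative.toAdd (f (inl (Multiplicative.ofAdd w)))
    rw [h2]
    simp only [map_inv, toAdd_mul, toAdd_inv]
    omega
  have hzero : ∀ w, g ((1 - A).mulVec w) = 0 := by
    intro w
    rw [Matrix.sub_mulVec, Matrix.one_mulVec, map_sub, hstep, sub_self]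
  have hsmul : ∀ w, g ((1 - A).det • w) = 0 := by
    intro w
    have : (1 - A).det • w = (1 - A).mulVec ((1 - A).adjugate.mulVec w) := by
      rw [Matrix.mulVec_mulVec, Matrix.mul_adjugate, Matrix.smul_mulVec,
        Matrix.one_mulVec]
    rw [this, hzero]
  have hv : g v = 0 := by
    have h0 := hsmul v
    rw [map_zsmul, smul_eq_mul] at h0
    rcases mul_eq_zero.mp h0 with h | h
    · exact absurd h h1
    · exact h
  have : Multiplicative.toAdd (f (inl (Multiplicative.ofAdd v))) = 0 := hv
  rw [← ofAdd_toAdd (f (inl (Multiplicative.ofAdd v))), this, ofAdd_zero]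

lemma conj_gen (a : Multiplicative (Fin 3 → ℤ)) (s : Multiplicative ℤ)
    (n : Multiplicative (Fin 3 → ℤ)) :
    (inl a * inr s : GG e) * inl n * (inl a * inr s)⁻¹ = inl (zAction e s n) := by
  rw [mul_inv_rev]
  have hx : (inl a * inr s : GG e) * inl n * ((inr s)⁻¹ * (inl a)⁻¹)
      = inl a * (inr s * inl n * (inr s)⁻¹) * (inl a)⁻¹ := by group
  rw [hx]
  rw [show (inr s : GG e)⁻¹ = inr s⁻¹ from (map_inv inr s).symm]
  rw [← inl_aut]
  rw [show (inl a : GG e)⁻¹ = inl a⁻¹ from (map_inv inl a).symm]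
  rw [← map_mul, ← map_mul, mul_comm a (zAction e s n), map_mul, map_mul, mul_assoc,
    ← map_mul, mul_inv_cancel, map_one, mul_one]

lemma rightHom_phi (he : ∀ v, e v = A.mulVec v) (h1 : (1 - A).det ≠ 0)
    (φ : GG e ≃* GG e) (z : GG e) :
    Multiplicative.toAdd (rightHom (φ z))
      = Multiplicative.toAdd (rightHom z)
        * Multiplicative.toAdd (rightHom (φ (inr (Multiplicative.ofAdd 1)))) := by
  have hz : z = inl z.left * inr z.right := (inl_left_mul_inr_right z).symm
  have hv : rightHom (φ (inl z.left)) = 1 := by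
    have := hom_vanish A e he h1 (rightHom.comp φ.toMonoidHom) (Multiplicative.toAdd z.left)
    simpa using this
  have hr : inr z.right = (inr (Multiplicative.ofAdd (1:ℤ)) : GG e) ^ (Multiplicative.toAdd z.right) := by
    rw [← map_zpow]
    congr 1
    rw [← ofAdd_zsmul, smul_eq_mul, mul_one, ofAdd_toAdd]
  calc Multiplicative.toAdd (rightHom (φ z))
      = Multiplicative.toAdd (rightHom (φ (inl z.left)) * rightHom (φ (inr z.right))) := by
        rw [← map_mul, ← map_mul, ← hz]
    _ = Multiplicative.toAdd (rightHom (φ (inr z.right))) := by rw [hv, one_mul]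
    _ = Multiplicative.toAdd z.right
          * Multiplicative.toAdd (rightHom (φ (inr (Multiplicative.ofAdd 1)))) := by
        rw [hr, map_zpow, map_zpow, toAdd_zpow, smul_eq_mul]
    _ = _ := by rw [hz]; simp

lemma phi_inl_eq (he : ∀ v, e v = A.mulVec v) (h1 : (1 - A).det ≠ 0)
    (φ : GG e ≃* GG e) (v : Fin 3 → ℤ) :
    φ (inl (Multiplicative.ofAdd v))
      = inl (Multiplicative.ofAdd
          (Multiplicative.toAdd ((φ (inl (Multiplicative.ofAdd v))).left))) := by
  have hr : (φ (inl (Multiplicative.ofAdd v))).right = 1 := by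
    have := hom_vanish A e he h1 (rightHom.comp φ.toMonoidHom) v
    simpa using this
  conv_lhs => rw [← inl_left_mul_inr_right (φ (inl (Multiplicative.ofAdd v)))]
  rw [hr, map_one, mul_one, ofAdd_toAdd]

lemma no_anti (hA : IsUnit A.det) (he : ∀ v, e v = A.mulVec v)
    (h1 : (1 - A).det ≠ 0) (h2 : (1 + A).det ≠ 0)
    (φ : GG e ≃* GG e)
    (hc : Multiplicative.toAdd (rightHom (φ (inr (Multiplicative.ofAdd 1)))) = -1) :
    False := by
  -- the restriction of φ to the ℤ³ factor, as an additive map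
  set mf : (Fin 3 → ℤ) → (Fin 3 → ℤ) :=
    fun v => Multiplicative.toAdd ((φ (inl (Multiplicative.ofAdd v))).left) with hmf
  set mf' : (Fin 3 → ℤ) → (Fin 3 → ℤ) :=
    fun v => Multiplicative.toAdd ((φ.symm (inl (Multiplicative.ofAdd v))).left) with hmf'
  have hphi : ∀ v, φ (inl (Multiplicative.ofAdd v)) = inl (Multiplicative.ofAdd (mf v)) :=
    fun v => phi_inl_eq A e he h1 φ v
  have hphi' : ∀ v, φ.symm (inl (Multiplicative.ofAdd v)) = inl (Multiplicative.ofAdd (mf' v)) :=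
    fun v => phi_inl_eq A e he h1 φ.symm v
  have hadd : ∀ a b, mf (a + b) = mf a + mf b := by
    intro a b
    have : (inl (Multiplicative.ofAdd (mf (a + b))) : GG e)
        = inl (Multiplicative.ofAdd (mf a + mf b)) := by
      rw [← hphi, ofAdd_add, ofAdd_add, map_mul, map_mul, hphi, hphi]
      exact (map_mul inl _ _).symm
    exact Multiplicative.ofAdd.injective (inl_injective this)
  have hadd' : ∀ a b, mf' (a + b) = mf' a + mf' b := by
    intro a b
    have : (inl (Multiplicative.ofAdd (mf' (a + b))) : GG e)
        = inl (Multiplicative.ofAdd (mf' a + mf' b)) := by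
      rw [← hphi', ofAdd_add, ofAdd_add, map_mul, map_mul, hphi', hphi']
      exact (map_mul inl _ _).symm
    exact Multiplicative.ofAdd.injective (inl_injective this)
  have hinv1 : ∀ v, mf' (mf v) = v := by
    intro v
    have : (inl (Multiplicative.ofAdd (mf' (mf v))) : GG e) = inl (Multiplicative.ofAdd v) := by
      rw [← hphi', ← hphi, MulEquiv.symm_apply_apply]
    exact Multiplicative.ofAdd.injective (inl_injective this)
  have hinv2 : ∀ v, mf (mf' v) = v := by
    intro v
    have : (inl (Multiplicative.ofAdd (mf (mf' v))) : GG e) = inl (Multiplicative.ofAdd v) := by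
      rw [← hphi, ← hphi', MulEquiv.apply_symm_apply]
    exact Multiplicative.ofAdd.injective (inl_injective this)
  set m : (Fin 3 → ℤ) →+ (Fin 3 → ℤ) := AddMonoidHom.mk' mf hadd with hm
  set m' : (Fin 3 → ℤ) →+ (Fin 3 → ℤ) := AddMonoidHom.mk' mf' hadd' with hm2
  set M : Matrix (Fin 3) (Fin 3) ℤ := LinearMap.toMatrix' m.toIntLinearMap with hM
  set M' : Matrix (Fin 3) (Fin 3) ℤ := LinearMap.toMatrix' m'.toIntLinearMap with hM'
  have hMv : ∀ v, M.mulVec v = mf v := by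
    intro v
    rw [hM, ← Matrix.toLin'_apply, Matrix.toLin'_toMatrix']
    rfl
  have hM'v : ∀ v, M'.mulVec v = mf' v := by
    intro v
    rw [hM', ← Matrix.toLin'_apply, Matrix.toLin'_toMatrix']
    rfl
  have hMM' : M * M' = 1 := by
    rw [hM, hM', ← LinearMap.toMatrix'_comp]
    have : m.toIntLinearMap ∘ₗ m'.toIntLinearMap = LinearMap.id := by
      apply LinearMap.ext
      intro v
      exact hinv2 v
    rw [this, LinearMap.toMatrix'_id]
  have hMunit : IsUnit M.det := Matrix.isUnit_det_of_right_inverse hMM'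
  -- the twisting relation
  have hs : rightHom (φ (inr (Multiplicative.ofAdd 1)))
      = (Multiplicative.ofAdd (-1 : ℤ)) := by
    rw [← ofAdd_toAdd (rightHom (φ (inr (Multiplicative.ofAdd 1)))), hc]
  have hrel : ∀ v, mf (e v) = e.symm (mf v) := by
    intro v
    have hconj := conj_inl e v
    have h2' := congrArg φ hconj
    rw [map_mul, map_mul, map_inv, map_inv] at h2'
    set x : GG e := φ (inr (Multiplicative.ofAdd 1)) with hx
    have hxdec : x = inl x.left * inr x.right := (inl_left_mul_inr_right x).symm
    have hxr : x.right = Multiplicative.ofAdd (-1 : ℤ) := hs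
    rw [hphi, hphi] at h2'
    rw [hxdec] at h2'
    rw [conj_gen e x.left x.right (Multiplicative.ofAdd (mf v))] at h2'
    rw [hxr, zAction_neg_one] at h2'
    exact Multiplicative.ofAdd.injective (inl_injective h2')
  have hrel2 : ∀ v, A.mulVec (M.mulVec (A.mulVec v)) = M.mulVec v := by
    intro v
    rw [hMv, hMv, ← he, ← he, hrel, AddEquiv.apply_symm_apply]
  have hAMA : A * M * A = M := by
    ext i j
    have h := hrel2 (Pi.single j 1)
    rw [Matrix.mulVec_mulVec, Matrix.mulVec_mulVec] at h
    have h2' := congrFun h i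
    rw [Matrix.mulVec_single_one, Matrix.mulVec_single_one] at h
    exact congrFun h i
  have hfinal : M * A = A⁻¹ * M := by
    have : A⁻¹ * (A * M * A) = A⁻¹ * M := by rw [hAMA]
    rw [← mul_assoc, ← mul_assoc, Matrix.nonsing_inv_mul A hA, one_mul] at this
    exact this
  exact aux_no_M A hA h1 h2 ⟨M, hMunit, hfinal⟩

/-- If `A ∈ GL₃(ℤ)` has no eigenvalue `1` or `-1` (i.e. `det(I - A) ≠ 0` and
`det(I + A) ≠ 0`), then no `M ∈ GL₃(ℤ)` satisfies `M A = A⁻¹ M`, and `ℤ³ ⋊_A ℤ` has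
the `R∞` property. -/
theorem rinf_Z3_no_eigenvalue_pm_one (A : Matrix (Fin 3) (Fin 3) ℤ)
    (hA : IsUnit A.det) (h1 : (1 - A).det ≠ 0) (h2 : (1 + A).det ≠ 0)
    (e : (Fin 3 → ℤ) ≃+ (Fin 3 → ℤ)) (he : ∀ v, e v = A.mulVec v) :
    (¬ ∃ M : Matrix (Fin 3) (Fin 3) ℤ, IsUnit M.det ∧ M * A = A⁻¹ * M) ∧
    hasRinf (Multiplicative (Fin 3 → ℤ) ⋊[zAction e] Multiplicative ℤ) := by
  constructor
  · exact aux_no_M A hA h1 h2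
  · intro φ
    have hcc : (1 : ℤ) = Multiplicative.toAdd
          (SemidirectProduct.rightHom (φ (SemidirectProduct.inr (Multiplicative.ofAdd 1))))
        * Multiplicative.toAdd
          (SemidirectProduct.rightHom (φ.symm (SemidirectProduct.inr (Multiplicative.ofAdd 1)))) := by
      have h := rightHom_phi A e he h1 φ.symm
        (φ (SemidirectProduct.inr (Multiplicative.ofAdd 1)))
      rw [MulEquiv.symm_apply_apply] at h
      simpa using h
    set c : ℤ := Multiplicative.toAdd
      (SemidirectProduct.rightHom (φ (SemidirectProduct.inr (Multiplicative.ofAdd 1)))) with hc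
    have hcu : c = 1 ∨ c = -1 := by
      rcases Int.isUnit_iff.mp (IsUnit.of_mul_eq_one (a := c) _ hcc.symm) with h | h
      · exact Or.inl h
      · exact Or.inr h
    rcases hcu with hc1 | hcneg
    · -- the automorphism preserves the projection to ℤ
      have hfix : ∀ z : GG e, SemidirectProduct.rightHom (φ z)
          = SemidirectProduct.rightHom z := by
        intro z
        apply Multiplicative.toAdd.injective
        rw [rightHom_phi A e he h1 φ z, ← hc, hc1, mul_one]
      have hresp : ∀ a b : GG e, twistedRel φ.toMonoidHom a b →
          SemidirectProduct.rightHom a = SemidirectProduct.rightHom b := by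
        rintro a b ⟨z, rfl⟩
        rw [map_mul, map_mul, map_inv]
        have : SemidirectProduct.rightHom (φ.toMonoidHom z)
            = SemidirectProduct.rightHom z := hfix z
        rw [this]
        apply Multiplicative.toAdd.injective
        simp only [toAdd_mul, toAdd_inv]
        omega
      exact Infinite.of_surjective
        (Quotient.lift (fun x => SemidirectProduct.rightHom x) hresp)
        (fun n => ⟨Quotient.mk _ (SemidirectProduct.inr n), by simp⟩)
    · exact absurd (no_anti A e hA he h1 h2 φ hcneg) (fun h => h)
end
end

section
/- Let M ∈ GL₂(ℤ) have finite order and M ≠ ±I. Then the centraliser of M in GL₂(ℤ) is the subgroup generated by −I and M. -/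
set_option maxHeartbeats 1600000

open Matrix

private lemma CH2 (A : Matrix (Fin 2) (Fin 2) ℤ) :
    A * A = (A 0 0 + A 1 1) • A - (A 0 0 * A 1 1 - A 0 1 * A 1 0) • (1 : Matrix (Fin 2) (Fin 2) ℤ) := by
  ext i j
  fin_cases i <;> fin_cases j <;>
    simp only [Matrix.mul_apply, Fin.sum_univ_two, Matrix.sub_apply, Matrix.smul_apply,
      Matrix.one_apply, smul_eq_mul] <;>
    norm_num <;> ring

private lemma unip (A : Matrix (Fin 2) (Fin 2) ℤ)
    (h : A * A = (2 : ℤ) • A - (1 : ℤ) • 1) (k : ℕ) (hk : 0 < k) (hAk : A ^ k = 1) :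
    A = 1 := by
  have key : ∀ n : ℕ, A ^ (n + 1) = ((n : ℤ) + 1) • A - (n : ℤ) • 1 := by
    intro n
    induction n with
    | zero => simp
    | succ n ih =>
      have h5 : A ^ (n + 1 + 1) = A ^ (n + 1) * A := by rw [pow_succ]
      rw [h5, ih, sub_mul, smul_mul_assoc, smul_mul_assoc, one_mul, h]
      push_cast
      module
  obtain ⟨k', rfl⟩ : ∃ k', k = k' + 1 := ⟨k - 1, by omega⟩
  have h2 := key k'
  rw [hAk] at h2
  ext i j
  have h3 := congrFun (congrFun h2 i) j
  simp only [Matrix.sub_apply, Matrix.smul_apply, Matrix.one_apply, smul_eq_mul] at h3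
  rcases eq_or_ne i j with rfl | hij
  · simp at h3 ⊢
    nlinarith [h3, Int.natCast_nonneg k']
  · simp [hij] at h3 ⊢
    rcases h3 with h3 | h3
    · omega
    · exact h3

private lemma trace_rec (A : Matrix (Fin 2) (Fin 2) ℤ) (t δ : ℤ)
    (hCH : A * A = t • A - δ • (1 : Matrix (Fin 2) (Fin 2) ℤ)) (n : ℕ) :
    Matrix.trace (A ^ (n + 2)) = t * Matrix.trace (A ^ (n + 1)) - δ * Matrix.trace (A ^ n) := by
  have hpow : A ^ (n + 2) = t • A ^ (n + 1) - δ • A ^ n := by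
    have h1 : A ^ (n + 2) = A ^ n * (A * A) := by
      rw [pow_succ, pow_succ, mul_assoc]
    rw [h1, hCH, mul_sub, mul_smul_comm, mul_smul_comm, mul_one, ← pow_succ]
  rw [hpow, Matrix.trace_sub, Matrix.trace_smul, Matrix.trace_smul, smul_eq_mul, smul_eq_mul]

private lemma no_big_trace_pos (A : Matrix (Fin 2) (Fin 2) ℤ) (t δ : ℤ)
    (hCH : A * A = t • A - δ • (1 : Matrix (Fin 2) (Fin 2) ℤ)) (htr : Matrix.trace A = t)
    (k : ℕ) (hk : 0 < k) (hAk : A ^ k = 1) (hδ : δ = 1) (ht : 3 ≤ t) : False := by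
  subst hδ
  set T : ℕ → ℤ := fun n => Matrix.trace (A ^ n) with hT
  have hT0 : T 0 = 2 := by simp [hT, Matrix.trace_one]
  have hT1 : T 1 = t := by simp [hT, htr]
  have hrec : ∀ n, T (n + 2) = t * T (n + 1) - T n := by
    intro n
    have h := trace_rec A t 1 hCH n
    simpa [hT] using h
  have inv : ∀ n, 2 ≤ T n ∧ T n + 1 ≤ T (n + 1) := by
    intro n
    induction n with
    | zero =>
      have e : T (0 + 1) = T 1 := rfl
      omega
    | succ n ih =>
      obtain ⟨h2, h3⟩ := ih
      have hstep : T (n + 1 + 1) = T (n + 2) := rfl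
      have h4 := hrec n
      constructor
      · omega
      · have hstep2 : T (n + 1 + 2) = T (n + 3) := rfl
        have h5 : T (n + 3) = t * T (n + 2) - T (n + 1) := hrec (n + 1)
        nlinarith
  have big : ∀ n, 3 ≤ T (n + 1) := by
    intro n
    induction n with
    | zero =>
      have e : T (0 + 1) = T 1 := rfl
      omega
    | succ n ih =>
      have h := (inv (n + 1)).2
      have e : T (n + 1 + 1) = T (n + 2) := rfl
      omega
  obtain ⟨k', rfl⟩ : ∃ k', k = k' + 1 := ⟨k - 1, by omega⟩
  have hTk : T (k' + 1) = 2 := by simp [hT, hAk, Matrix.trace_one]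
  have := big k'
  omega

private lemma no_big_trace_neg (A : Matrix (Fin 2) (Fin 2) ℤ) (t δ : ℤ)
    (hCH : A * A = t • A - δ • (1 : Matrix (Fin 2) (Fin 2) ℤ)) (htr : Matrix.trace A = t)
    (k : ℕ) (hk : 0 < k) (hAk : A ^ k = 1) (hδ : δ = -1) (ht : 1 ≤ t) : False := by
  subst hδ
  set T : ℕ → ℤ := fun n => Matrix.trace (A ^ n) with hT
  have hT0 : T 0 = 2 := by simp [hT, Matrix.trace_one]
  have hT1 : T 1 = t := by simp [hT, htr]
  have hrec : ∀ n, T (n + 2) = t * T (n + 1) + T n := by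
    intro n
    have h := trace_rec A t (-1) hCH n
    simp only [hT] at h ⊢
    omega
  have inv : ∀ n, (1 ≤ T n ∧ 1 ≤ T (n + 1)) ∧ 3 ≤ T n + T (n + 1) := by
    intro n
    induction n with
    | zero =>
      have e : T (0 + 1) = T 1 := rfl
      refine ⟨⟨by omega, by omega⟩, by omega⟩
    | succ n ih =>
      obtain ⟨⟨h1, h2⟩, h3⟩ := ih
      have hstep : T (n + 1 + 1) = T (n + 2) := rfl
      have h4 := hrec n
      have h5 : T (n + 1) + T n ≤ T (n + 2) := by nlinarith
      exact ⟨⟨by omega, by omega⟩, by omega⟩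
  have big : ∀ n, 3 ≤ T (n + 2) := by
    intro n
    have h4 := hrec n
    obtain ⟨⟨h1, h2⟩, h3⟩ := inv n
    nlinarith
  rcases Nat.lt_or_ge k 2 with hk2 | hk2
  · have hk1 : k = 1 := by omega
    rw [hk1, pow_one] at hAk
    rw [hAk] at hCH htr
    have h6 := congrArg Matrix.trace hCH
    rw [mul_one, Matrix.trace_sub, Matrix.trace_smul, Matrix.trace_smul, Matrix.trace_one] at h6
    simp only [smul_eq_mul] at h6
    norm_num at h6
    have ht2 : (2:ℤ) = t := by simpa [Matrix.trace_one] using htr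
    omega
  · obtain ⟨k', rfl⟩ : ∃ k', k = k' + 2 := ⟨k - 2, by omega⟩
    have hTk : T (k' + 2) = 2 := by simp [hT, hAk, Matrix.trace_one]
    have := big k'
    omega

private lemma classify (M : (Matrix (Fin 2) (Fin 2) ℤ)ˣ)
    (hfin : IsOfFinOrder M) (h1 : M ≠ 1) (h2 : M ≠ -1) :
    ((M : Matrix (Fin 2) (Fin 2) ℤ).det = 1 ∧
      ((M : Matrix (Fin 2) (Fin 2) ℤ).trace = -1 ∨ (M : Matrix (Fin 2) (Fin 2) ℤ).trace = 0 ∨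
        (M : Matrix (Fin 2) (Fin 2) ℤ).trace = 1)) ∨
    ((M : Matrix (Fin 2) (Fin 2) ℤ).det = -1 ∧ (M : Matrix (Fin 2) (Fin 2) ℤ).trace = 0) := by
  set A : Matrix (Fin 2) (Fin 2) ℤ := (M : Matrix (Fin 2) (Fin 2) ℤ) with hA
  set t : ℤ := A.trace with htdef
  have hk : 0 < orderOf M := hfin.orderOf_pos
  have hMk : M ^ orderOf M = 1 := pow_orderOf_eq_one M
  have hAk : A ^ orderOf M = 1 := by
    rw [hA, ← Units.val_pow_eq_pow_val, hMk, Units.val_one]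
  have hCH : A * A = t • A - A.det • (1 : Matrix (Fin 2) (Fin 2) ℤ) := by
    rw [htdef, Matrix.trace_fin_two, Matrix.det_fin_two]; exact CH2 A
  have hdet : A.det = 1 ∨ A.det = -1 := by
    have hu : IsUnit A.det := by
      rw [← Matrix.isUnit_iff_isUnit_det]; exact ⟨M, rfl⟩
    exact Int.isUnit_iff.mp hu
  -- facts about -A
  have hAk2 : (-A) ^ (2 * orderOf M) = 1 := by
    rw [neg_pow, Even.neg_one_pow (by exact ⟨orderOf M, by ring⟩), one_mul,
      mul_comm 2 (orderOf M), pow_mul, hAk, one_pow]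
  have htrneg : Matrix.trace (-A) = -t := by rw [Matrix.trace_neg, htdef]
  have hdetneg : (-A).det = A.det := by simp [Matrix.det_neg]
  have hCHneg : (-A) * (-A) = (-t) • (-A) - A.det • (1 : Matrix (Fin 2) (Fin 2) ℤ) := by
    rw [neg_mul_neg, hCH]; module
  rcases hdet with hdet1 | hdet1
  · -- det = 1
    have hb1 : t ≤ 2 := by
      by_contra h
      exact no_big_trace_pos A t A.det hCH rfl (orderOf M) hk hAk hdet1 (by omega)
    have hb2 : -2 ≤ t := by
      by_contra h
      exact no_big_trace_pos (-A) (-t) A.det hCHneg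
        htrneg (2 * orderOf M) (by omega) hAk2 hdet1 (by omega)
    have hb3 : t ≠ 2 := by
      intro ht2
      have : A = 1 := by
        apply unip A _ (orderOf M) hk hAk
        rw [← hdet1, ← ht2]; exact hCH
      exact h1 (Units.ext (by rw [← hA, this, Units.val_one]))
    have hb4 : t ≠ -2 := by
      intro ht2
      have : -A = 1 := by
        apply unip (-A) _ (2 * orderOf M) (by omega) hAk2
        have : (2:ℤ) = -t := by omega
        rw [this, ← hdet1]
        rw [hdet1] at hCHneg ⊢
        exact hCHneg
      have hA1 : A = -1 := by
        have h7 := congrArg Neg.neg this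
        simpa using h7
      exact h2 (Units.ext (by rw [← hA, hA1]; simp))
    exact Or.inl ⟨hdet1, by omega⟩
  · -- det = -1
    have hb1 : t ≤ 0 := by
      by_contra h
      exact no_big_trace_neg A t A.det hCH rfl (orderOf M) hk hAk hdet1 (by omega)
    have hb2 : 0 ≤ t := by
      by_contra h
      exact no_big_trace_neg (-A) (-t) A.det hCHneg
        htrneg (2 * orderOf M) (by omega) hAk2 hdet1 (by omega)
    exact Or.inr ⟨hdet1, by omega⟩

private lemma case_det1 (a b c d p q r s : ℤ)
    (hdet : a * d - b * c = 1)
    (ht : a + d = -1 ∨ a + d = 0 ∨ a + d = 1)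
    (e1 : b * r = c * q)
    (e2 : q * (a - d) = b * (p - s))
    (hdB : p * s - q * r = 1 ∨ p * s - q * r = -1) :
    (p = 1 ∧ q = 0 ∧ r = 0 ∧ s = 1) ∨ (p = -1 ∧ q = 0 ∧ r = 0 ∧ s = -1) ∨
    (p = a ∧ q = b ∧ r = c ∧ s = d) ∨ (p = -a ∧ q = -b ∧ r = -c ∧ s = -d) ∨
    (p = a - (a + d) ∧ q = b ∧ r = c ∧ s = d - (a + d)) ∨
    (p = (a + d) - a ∧ q = -b ∧ r = -c ∧ s = (a + d) - d) := by
  have key : (a - d) * (a - d) + 4 * (b * c) = (a + d) * (a + d) - 4 := by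
    linear_combination (-4) * hdet
  have ht2 : (a + d) * (a + d) ≤ 1 := by rcases ht with h | h | h <;> rw [h] <;> norm_num
  have hb : b ≠ 0 := by
    intro h; rw [h] at key; nlinarith [mul_self_nonneg (a - d)]
  have hc : c ≠ 0 := by
    intro h; rw [h] at key; nlinarith [mul_self_nonneg (a - d)]
  set G : ℤ := (Int.gcd b c : ℤ) with hGdef
  have hGb : G ∣ b := Int.gcd_dvd_left b c
  have hGc : G ∣ c := Int.gcd_dvd_right b c
  have hG0 : G ≠ 0 := by
    simp only [hGdef, ne_eq, Int.natCast_eq_zero, Int.gcd_eq_zero_iff]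
    tauto
  obtain ⟨b', hb'⟩ := hGb
  obtain ⟨c', hc'⟩ := hGc
  have hb'0 : b' ≠ 0 := by rintro rfl; simp at hb'; tauto
  have hcop : IsCoprime b' c' := by
    rw [Int.isCoprime_iff_gcd_eq_one]
    have hpos : 0 < Int.gcd b c := by
      rcases Int.gcd_eq_zero_iff.not.mpr (by tauto : ¬(b = 0 ∧ c = 0)) with h
      omega
    have hbG : b / G = b' := by rw [hb']; exact Int.mul_ediv_cancel_left _ hG0
    have hcG : c / G = c' := by rw [hc']; exact Int.mul_ediv_cancel_left _ hG0
    have := Int.gcd_div_gcd_div_gcd (i := b) (j := c) hpos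
    rwa [← hGdef, hbG, hcG] at this
  -- from e1 : b' * r = c' * q
  have e1' : b' * r = c' * q := by
    apply mul_left_cancel₀ hG0
    rw [show G * (b' * r) = (G * b') * r by ring, ← hb',
        show G * (c' * q) = (G * c') * q by ring, ← hc']
    exact e1
  have hbq : b' ∣ q := hcop.dvd_of_dvd_mul_left ⟨r, by linear_combination -e1'⟩
  obtain ⟨k, hk⟩ := hbq
  have hr : r = c' * k := by
    apply mul_left_cancel₀ hb'0
    rw [e1', hk]; ring
  have e2' : k * (a - d) = G * (p - s) := by
    apply mul_left_cancel₀ hb'0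
    have : q * (a - d) = b * (p - s) := e2
    rw [hk, hb'] at this
    linear_combination this
  -- coprimality of G and (a - d)
  have hcop2 : IsCoprime G (a - d) := by
    rw [Int.isCoprime_iff_gcd_eq_one]
    set f : ℕ := Int.gcd G (a - d) with hfdef
    have hfG : (f : ℤ) ∣ G := Int.gcd_dvd_left G (a - d)
    have hfad : (f : ℤ) ∣ (a - d) := Int.gcd_dvd_right G (a - d)
    have hfb : (f : ℤ) ∣ b := hfG.trans ⟨b', hb'⟩
    have hfc : (f : ℤ) ∣ c := hfG.trans ⟨c', hc'⟩
    have hsq : ((f : ℤ) * f) ∣ (a + d) * (a + d) - 4 := by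
      rw [← key]
      exact dvd_add (mul_dvd_mul hfad hfad) (Dvd.dvd.mul_left (mul_dvd_mul hfb hfc) 4)
    have hf0 : f ≠ 0 := by
      intro h
      rw [h] at hfG
      simp at hfG
      exact hG0 hfG
    rcases ht with h | h | h
    · rw [h] at hsq; norm_num at hsq
      have h3 : ((f:ℤ) * f) ∣ 3 := hsq
      have := Int.le_of_dvd (by norm_num) h3
      have : (f : ℤ) ≤ 1 := by nlinarith [Int.natCast_nonneg f]
      omega
    · -- t = 0 : f*f ∣ 4, exclude f = 2
      rw [h] at hsq; norm_num at hsq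
      have h4 : ((f:ℤ) * f) ∣ 4 := hsq
      have hle := Int.le_of_dvd (by norm_num) h4
      have hf2 : (f : ℤ) ≤ 2 := by nlinarith [Int.natCast_nonneg f]
      have : f = 1 ∨ f = 2 := by omega
      rcases this with h1 | h1
      · exact h1
      · exfalso
        have h2b : (2:ℤ) ∣ b := by rw [h1] at hfb; exact_mod_cast hfb
        have h2c : (2:ℤ) ∣ c := by rw [h1] at hfc; exact_mod_cast hfc
        obtain ⟨b2, hb2⟩ := h2b
        obtain ⟨c2, hc2⟩ := h2c
        have hd : d = -a := by omega
        rw [hb2, hc2, hd] at hdet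
        rcases Int.even_or_odd a with ⟨m, hm⟩ | ⟨m, hm⟩
        · have haa : a * a = 4 * (m * m) := by rw [hm]; ring
          have : -(a*a) - 4 * (b2 * c2) = 1 := by linear_combination hdet
          rw [haa] at this
          omega
        · have haa : a * a = 4 * (m * m + m) + 1 := by rw [hm]; ring
          have : -(a*a) - 4 * (b2 * c2) = 1 := by linear_combination hdet
          rw [haa] at this
          omega
    · rw [h] at hsq; norm_num at hsq
      have h3 : ((f:ℤ) * f) ∣ 3 := hsq
      have := Int.le_of_dvd (by norm_num) h3
      have : (f : ℤ) ≤ 1 := by nlinarith [Int.natCast_nonneg f]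
      omega
  have hGk : G ∣ k := hcop2.dvd_of_dvd_mul_right ⟨p - s, e2'⟩
  obtain ⟨y, hy⟩ := hGk
  have hq : q = b * y := by rw [hk, hy, hb']; ring
  have hr2 : r = c * y := by rw [hr, hy, hc']; ring
  have hps : p - s = y * (a - d) := by
    apply mul_left_cancel₀ hG0
    rw [← e2', hy]; ring
  have hs : s = p - y * (a - d) := by linarith
  -- determinant identity
  obtain ⟨X, hX⟩ : ∃ X : ℤ, X = 2 * p - y * (a - d) := ⟨_, rfl⟩
  have hiden : 4 * (p * s - q * r) =
      X * X + (4 - (a + d) * (a + d)) * (y * y) := by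
    rw [hX, hs, hq, hr2]
    linear_combination (-(y * y)) * key
  have E : X * X + (4 - (a + d) * (a + d)) * (y * y) = 4 := by
    rcases hdB with h | h
    · rw [h] at hiden; linarith
    · exfalso
      rw [h] at hiden
      nlinarith [mul_self_nonneg X, mul_self_nonneg y]
  have hy2 : y * y ≤ 1 := by nlinarith [mul_self_nonneg X]
  have hy1a : -1 ≤ y := by nlinarith [mul_self_nonneg (y + 1)]
  have hy1b : y ≤ 1 := by nlinarith [mul_self_nonneg (y - 1)]
  clear hiden hdB e1 e2 e1' e2' hk hr key hcop hcop2
  interval_cases y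
  · -- y = -1
    have EX : X * X = (a + d) * (a + d) := by linarith
    have hfac : (X - (a + d)) * (X + (a + d)) = 0 := by linear_combination EX
    rcases mul_eq_zero.mp hfac with h | h
    · right; right; right; right; right
      exact ⟨by linarith, by linarith, by linarith, by linarith⟩
    · right; right; right; left
      exact ⟨by linarith, by linarith, by linarith, by linarith⟩
  · -- y = 0
    have EX : X * X = 4 := by linarith
    have hfac : (X - 2) * (X + 2) = 0 := by linear_combination EX
    rcases mul_eq_zero.mp hfac with h | h
    · left
      exact ⟨by linarith, by linarith, by linarith, by linarith⟩
    · right; left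
      exact ⟨by linarith, by linarith, by linarith, by linarith⟩
  · -- y = 1
    have EX : X * X = (a + d) * (a + d) := by linarith
    have hfac : (X - (a + d)) * (X + (a + d)) = 0 := by linear_combination EX
    rcases mul_eq_zero.mp hfac with h | h
    · right; right; left
      exact ⟨by linarith, by linarith, by linarith, by linarith⟩
    · right; right; right; right; left
      exact ⟨by linarith, by linarith, by linarith, by linarith⟩

-- δ = -1 case: M = !![a, b; c, -a], a*a + b*c = 1
private lemma case_detm1 (a b c p q r s : ℤ)
    (hdet : a * a + b * c = 1)
    (e1 : b * r = c * q)
    (e2 : q * (2 * a) = b * (p - s))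
    (e3 : c * (p - s) = r * (2 * a))
    (hdB : p * s - q * r = 1 ∨ p * s - q * r = -1) :
    (p = 1 ∧ q = 0 ∧ r = 0 ∧ s = 1) ∨ (p = -1 ∧ q = 0 ∧ r = 0 ∧ s = -1) ∨
    (p = a ∧ q = b ∧ r = c ∧ s = -a) ∨ (p = -a ∧ q = -b ∧ r = -c ∧ s = a) := by
  have hps : ∀ u v : ℤ, u * v = 1 → (u = 1 ∧ v = 1) ∨ (u = -1 ∧ v = -1) :=
    fun u v h => Int.eq_one_or_neg_one_of_mul_eq_one' h
  rcases eq_or_ne b 0 with hb | hb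
  · -- b = 0
    subst hb
    have ha2 : a * a = 1 := by linear_combination hdet
    have hq : q = 0 := by
      rcases eq_or_ne c 0 with hc | hc
      · subst hc
        rcases hps a a ha2 with ⟨ha, -⟩ | ⟨ha, -⟩ <;> subst ha <;> linarith [e2]
      · have h0 : c * q = 0 := by linarith [e1]
        rcases mul_eq_zero.mp h0 with h | h
        · exact absurd h hc
        · exact h
    rcases hps a a ha2 with ⟨ha, -⟩ | ⟨ha, -⟩ <;> subst ha <;>
    · rcases hdB with h | h
      · have hps1 : p * s = 1 := by linarith [h, hq, (by rw [hq] : q * r = 0 * r)]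
        rcases hps p s hps1 with ⟨h1, h2⟩ | ⟨h1, h2⟩ <;> subst h1 <;> subst h2 <;>
          [skip; skip] <;> first
          | (exact Or.inl ⟨rfl, hq, by linarith [e3], rfl⟩)
          | (exact Or.inr (Or.inl ⟨rfl, hq, by linarith [e3], rfl⟩))
      · have hps1 : p * (-s) = 1 := by
          have hqr : q * r = 0 := by rw [hq]; ring
          linarith [h, hqr]
        rcases hps p (-s) hps1 with ⟨h1, h2⟩ | ⟨h1, h2⟩ <;> subst h1 <;>
          (have hss : s = -1 ∨ s = 1 := by omega) <;> rcases hss with hs1 | hs1 <;>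
          subst hs1 <;> first
          | (exact Or.inr (Or.inr (Or.inl ⟨rfl, hq, by linarith [e3], rfl⟩)))
          | (exact Or.inr (Or.inr (Or.inr ⟨rfl, hq, by linarith [e3], rfl⟩)))
          | omega
  · rcases eq_or_ne c 0 with hc | hc
    · -- c = 0, b ≠ 0
      subst hc
      have ha2 : a * a = 1 := by linear_combination hdet
      have hr : r = 0 := by
        have h0 : b * r = 0 := by linarith [e1]
        rcases mul_eq_zero.mp h0 with h | h
        · exact absurd h hb
        · exact h
      rcases hps a a ha2 with ⟨ha, -⟩ | ⟨ha, -⟩ <;> subst ha <;>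
      · rcases hdB with h | h
        · have hps1 : p * s = 1 := by
            have hqr : q * r = 0 := by rw [hr]; ring
            linarith [h, hqr]
          rcases hps p s hps1 with ⟨h1, h2⟩ | ⟨h1, h2⟩ <;> subst h1 <;> subst h2 <;> first
            | (exact Or.inl ⟨rfl, by linarith [e2], hr, rfl⟩)
            | (exact Or.inr (Or.inl ⟨rfl, by linarith [e2], hr, rfl⟩))
        · have hps1 : p * (-s) = 1 := by
            have hqr : q * r = 0 := by rw [hr]; ring
            linarith [h, hqr]
          rcases hps p (-s) hps1 with ⟨h1, h2⟩ | ⟨h1, h2⟩ <;> subst h1 <;>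
            (have hss : s = -1 ∨ s = 1 := by omega) <;> rcases hss with hs1 | hs1 <;>
            subst hs1 <;> first
            | (exact Or.inr (Or.inr (Or.inl ⟨rfl, by linarith [e2], hr, rfl⟩)))
            | (exact Or.inr (Or.inr (Or.inr ⟨rfl, by linarith [e2], hr, rfl⟩)))
            | omega
    · -- b ≠ 0, c ≠ 0 : gcd argument
      set G : ℤ := (Int.gcd b c : ℤ) with hGdef
      have hGb : G ∣ b := Int.gcd_dvd_left b c
      have hGc : G ∣ c := Int.gcd_dvd_right b c
      have hG0 : G ≠ 0 := by
        simp only [hGdef, ne_eq, Int.natCast_eq_zero, Int.gcd_eq_zero_iff]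
        tauto
      obtain ⟨b', hb'⟩ := hGb
      obtain ⟨c', hc'⟩ := hGc
      have hb'0 : b' ≠ 0 := by rintro rfl; simp at hb'; tauto
      have hcop : IsCoprime b' c' := by
        rw [Int.isCoprime_iff_gcd_eq_one]
        have hpos : 0 < Int.gcd b c := by
          rcases Int.gcd_eq_zero_iff.not.mpr (by tauto : ¬(b = 0 ∧ c = 0)) with h
          omega
        have hbG : b / G = b' := by rw [hb']; exact Int.mul_ediv_cancel_left _ hG0
        have hcG : c / G = c' := by rw [hc']; exact Int.mul_ediv_cancel_left _ hG0
        have := Int.gcd_div_gcd_div_gcd (i := b) (j := c) hpos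
        rwa [← hGdef, hbG, hcG] at this
      have e1' : b' * r = c' * q := by
        apply mul_left_cancel₀ hG0
        rw [show G * (b' * r) = (G * b') * r by ring, ← hb',
            show G * (c' * q) = (G * c') * q by ring, ← hc']
        exact e1
      have hbq : b' ∣ q := hcop.dvd_of_dvd_mul_left ⟨r, by linear_combination -e1'⟩
      obtain ⟨k, hk⟩ := hbq
      have hr : r = c' * k := by
        apply mul_left_cancel₀ hb'0
        rw [e1', hk]; ring
      have e2' : k * (2 * a) = G * (p - s) := by
        apply mul_left_cancel₀ hb'0
        have h5 : q * (2 * a) = b * (p - s) := e2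
        rw [hk, hb'] at h5
        linear_combination h5
      have hcop2 : IsCoprime G a := by
        rw [Int.isCoprime_iff_gcd_eq_one]
        set f : ℕ := Int.gcd G a with hfdef
        have hfG : (f : ℤ) ∣ G := Int.gcd_dvd_left G a
        have hfa : (f : ℤ) ∣ a := Int.gcd_dvd_right G a
        have hfb : (f : ℤ) ∣ b := hfG.trans ⟨b', hb'⟩
        have hfc : (f : ℤ) ∣ c := hfG.trans ⟨c', hc'⟩
        have hsq : ((f : ℤ) * f) ∣ 1 := by
          rw [← hdet]
          exact dvd_add (mul_dvd_mul hfa hfa) (mul_dvd_mul hfb hfc)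
        have h1 := Int.le_of_dvd (by norm_num) hsq
        have hf0 : f ≠ 0 := by
          intro h
          rw [h] at hfG
          simp at hfG
          exact hG0 hfG
        have h2 : 1 ≤ (f : ℤ) := by exact_mod_cast Nat.one_le_iff_ne_zero.mpr hf0
        nlinarith
      have hG2k : G ∣ 2 * k := hcop2.dvd_of_dvd_mul_right ⟨p - s, by linear_combination e2'⟩
      obtain ⟨m, hm⟩ := hG2k
      have hD : p - s = a * m := by
        apply mul_left_cancel₀ hG0
        rw [← e2', show k * (2 * a) = a * (2 * k) by ring, hm]; ring
      have hs : s = p - a * m := by linarith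
      obtain ⟨X, hX⟩ : ∃ X : ℤ, X = 2 * p - a * m := ⟨_, rfl⟩
      have hbc : b * c = G * G * (b' * c') := by rw [hb', hc']; ring
      have hiden4 : 4 * (X * X) - 4 * (m * m) = 16 * (p * s - q * r) := by
        rw [hX, hs, hk, hr]
        linear_combination (4 * (m * m)) * hdet - (4 * (m * m)) * hbc +
          (4 * b' * c' * (2 * k + G * m)) * hm
      have hiden : X * X - m * m = 4 * (p * s - q * r) := by linarith
      rcases hdB with h | h
      · -- X*X - m*m = 4 : N = ±1
        have E : X * X - m * m = 4 := by rw [h] at hiden; linarith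
        obtain ⟨u, hu⟩ : ∃ u : ℤ, u = X - m := ⟨_, rfl⟩
        have hfac : u * (X + m) = 4 := by rw [hu]; linear_combination E
        have hdvd : u ∣ 4 := ⟨X + m, hfac.symm⟩
        have hub : u ≤ 4 := Int.le_of_dvd (by norm_num) hdvd
        have hlb : -4 ≤ u := by
          have := Int.le_of_dvd (show (0:ℤ) < 4 by norm_num) ((neg_dvd).mpr hdvd)
          linarith
        have hXm : m = 0 ∧ (X = 2 ∨ X = -2) := by
          interval_cases u <;> omega
        obtain ⟨hm0, hX2⟩ := hXm
        subst hm0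
        have hk0 : k = 0 := by linarith [hm]
        subst hk0
        have hq0 : q = 0 := by rw [hk]; ring
        have hr0 : r = 0 := by rw [hr]; ring
        have hsp : s = p := by rw [hs]; ring
        rcases hX2 with h2 | h2
        · exact Or.inl ⟨by linarith [hX], hq0, hr0, by rw [hsp]; linarith [hX]⟩
        · exact Or.inr (Or.inl ⟨by linarith [hX], hq0, hr0, by rw [hsp]; linarith [hX]⟩)
      · -- X*X - m*m = -4 : N = ±M
        have E : X * X - m * m = -4 := by rw [h] at hiden; linarith
        obtain ⟨u, hu⟩ : ∃ u : ℤ, u = X - m := ⟨_, rfl⟩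
        have hfac : u * (X + m) = -4 := by rw [hu]; linear_combination E
        have hdvd : u ∣ 4 := (dvd_neg.mp ⟨X + m, hfac.symm⟩ : u ∣ 4)
        have hub : u ≤ 4 := Int.le_of_dvd (by norm_num) hdvd
        have hlb : -4 ≤ u := by
          have := Int.le_of_dvd (show (0:ℤ) < 4 by norm_num) ((neg_dvd).mpr hdvd)
          linarith
        have hXm : X = 0 ∧ (m = 2 ∨ m = -2) := by
          interval_cases u <;> omega
        obtain ⟨hX0, hm2⟩ := hXm
        rcases hm2 with h2 | h2
        · -- m = 2 : k = G, N = M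
          subst h2
          have hkG : k = G := by linarith [hm]
          subst hkG
          refine Or.inr (Or.inr (Or.inl ⟨?_, ?_, ?_, ?_⟩))
          · -- p = a : from X = 2p - 2a = 0
            have := hX; rw [hX0] at this; linarith
          · rw [hk, hb']; ring
          · rw [hr, hc']; ring
          · have hp : p = a := by have := hX; rw [hX0] at this; linarith
            rw [hs, hp]; ring
        · subst h2
          have hkG : k = -G := by linarith [hm]
          subst hkG
          refine Or.inr (Or.inr (Or.inr ⟨?_, ?_, ?_, ?_⟩))
          · have := hX; rw [hX0] at this; linarith
          · rw [hk, hb']; ring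
          · rw [hr, hc']; ring
          · have hp : p = -a := by have := hX; rw [hX0] at this; linarith
            rw [hs, hp]; ring

/-- Let `M ∈ GL₂(ℤ)` have finite order and `M ≠ ±I`. Then the centraliser of `M` in
`GL₂(ℤ)` is the subgroup generated by `-I` and `M`. -/
theorem centralizer_of_finite_order_matrix (M : (Matrix (Fin 2) (Fin 2) ℤ)ˣ)
    (hfin : IsOfFinOrder M) (h1 : M ≠ 1) (h2 : M ≠ -1) :
    Subgroup.centralizer {M} = Subgroup.closure {-1, M} := by
  apply le_antisymm
  · -- hard direction
    intro N hN
    have hMcl : M ∈ Subgroup.closure ({-1, M} : Set (Matrix (Fin 2) (Fin 2) ℤ)ˣ) :=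
      Subgroup.subset_closure (by simp)
    have hNegcl : (-1 : (Matrix (Fin 2) (Fin 2) ℤ)ˣ) ∈
        Subgroup.closure ({-1, M} : Set (Matrix (Fin 2) (Fin 2) ℤ)ˣ) :=
      Subgroup.subset_closure (by simp)
    obtain ⟨a, b, c, d, hA⟩ : ∃ a b c d : ℤ, (M : Matrix (Fin 2) (Fin 2) ℤ) = !![a, b; c, d] :=
      ⟨_, _, _, _, Matrix.eta_fin_two _⟩
    obtain ⟨p, q, r, s, hB⟩ : ∃ p q r s : ℤ, (N : Matrix (Fin 2) (Fin 2) ℤ) = !![p, q; r, s] :=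
      ⟨_, _, _, _, Matrix.eta_fin_two _⟩
    have hc : M * N = N * M := Subgroup.mem_centralizer_iff.mp hN M (Set.mem_singleton M)
    have hv : (M : Matrix (Fin 2) (Fin 2) ℤ) * N = (N : Matrix (Fin 2) (Fin 2) ℤ) * M := by
      have := congrArg Units.val hc
      simpa only [Units.val_mul] using this
    rw [hA, hB] at hv
    have e00 := congrFun (congrFun hv 0) 0
    have e01 := congrFun (congrFun hv 0) 1
    have e10 := congrFun (congrFun hv 1) 0
    simp [Matrix.mul_apply, Fin.sum_univ_two] at e00 e01 e10
    have e1 : b * r = c * q := by linarith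
    have e2 : q * (a - d) = b * (p - s) := by linear_combination e01
    have e3 : c * (p - s) = r * (a - d) := by linear_combination e10
    have hdB : p * s - q * r = 1 ∨ p * s - q * r = -1 := by
      have hu : IsUnit ((N : Matrix (Fin 2) (Fin 2) ℤ)).det :=
        (Matrix.isUnit_iff_isUnit_det _).mp N.isUnit
      rw [hB, Matrix.det_fin_two_of] at hu
      exact Int.isUnit_iff.mp hu
    have vneg : ((-1 : (Matrix (Fin 2) (Fin 2) ℤ)ˣ) : Matrix (Fin 2) (Fin 2) ℤ) = -1 := by simp
    have vnegM : (((-1) * M : (Matrix (Fin 2) (Fin 2) ℤ)ˣ) : Matrix (Fin 2) (Fin 2) ℤ)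
        = -(M : Matrix (Fin 2) (Fin 2) ℤ) := by simp
    have vM2 : ((M * M : (Matrix (Fin 2) (Fin 2) ℤ)ˣ) : Matrix (Fin 2) (Fin 2) ℤ)
        = (M : Matrix (Fin 2) (Fin 2) ℤ) * (M : Matrix (Fin 2) (Fin 2) ℤ) := by simp
    have vnegM2 : (((-1) * (M * M) : (Matrix (Fin 2) (Fin 2) ℤ)ˣ) : Matrix (Fin 2) (Fin 2) ℤ)
        = -((M : Matrix (Fin 2) (Fin 2) ℤ) * (M : Matrix (Fin 2) (Fin 2) ℤ)) := by simp
    rcases classify M hfin h1 h2 with ⟨hdet, ht⟩ | ⟨hdet, ht⟩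
    · -- det = 1
      rw [hA, Matrix.det_fin_two_of] at hdet
      rw [hA, Matrix.trace_fin_two_of] at ht
      have hAA : (M : Matrix (Fin 2) (Fin 2) ℤ) * M =
          !![a * (a + d) - 1, b * (a + d); c * (a + d), d * (a + d) - 1] := by
        rw [hA]
        ext i j
        fin_cases i <;> fin_cases j <;> simp [Matrix.mul_apply, Fin.sum_univ_two] <;>
          linarith [hdet]
      rcases case_det1 a b c d p q r s hdet ht e1 e2 hdB with
        ⟨h1', h2', h3', h4'⟩ | ⟨h1', h2', h3', h4'⟩ | ⟨h1', h2', h3', h4'⟩ |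
        ⟨h1', h2', h3', h4'⟩ | ⟨h1', h2', h3', h4'⟩ | ⟨h1', h2', h3', h4'⟩ <;>
        subst h1' <;> subst h2' <;> subst h3' <;> subst h4'
      · -- N = 1
        have hN1 : N = 1 := Units.ext (by rw [hB, Units.val_one, Matrix.one_fin_two])
        rw [hN1]; exact one_mem _
      · -- N = -1
        have hN1 : N = -1 := Units.ext (by
          rw [hB, vneg]
          ext i j; fin_cases i <;> fin_cases j <;> simp)
        rw [hN1]; exact hNegcl
      · -- N = M
        have hN1 : N = M := Units.ext (by rw [hB, hA])
        rw [hN1]; exact hMcl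
      · -- N = -M
        have hN1 : N = (-1) * M := Units.ext (by
          rw [hB, vnegM, hA]
          ext i j; fin_cases i <;> fin_cases j <;> simp)
        rw [hN1]; exact mul_mem hNegcl hMcl
      · -- N = M^2 (t = 1) or -(M^2) (t = -1) or M (t = 0)
        rcases ht with htv | htv | htv
        · -- t = -1 : B = A + 1 = -(A*A) : N = (-1) * (M * M)
          have hN1 : N = (-1) * (M * M) := Units.ext (by
            rw [hB, vnegM2, hAA, htv]
            ext i j; fin_cases i <;> fin_cases j <;> simp <;> ring)
          rw [hN1]; exact mul_mem hNegcl (mul_mem hMcl hMcl)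
        · have hN1 : N = M := Units.ext (by
            rw [hB, hA, htv]
            ext i j; fin_cases i <;> fin_cases j <;> simp)
          rw [hN1]; exact hMcl
        · have hN1 : N = M * M := Units.ext (by
            rw [hB, vM2, hAA, htv]
            ext i j; fin_cases i <;> fin_cases j <;> simp <;> ring)
          rw [hN1]; exact mul_mem hMcl hMcl
      · rcases ht with htv | htv | htv
        · -- t = -1 : B = -A - 1 = A*A : N = M * M
          have hN1 : N = M * M := Units.ext (by
            rw [hB, vM2, hAA, htv]
            ext i j; fin_cases i <;> fin_cases j <;> simp <;> ring)
          rw [hN1]; exact mul_mem hMcl hMcl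
        · have hN1 : N = (-1) * M := Units.ext (by
            rw [hB, vnegM, hA, htv]
            ext i j; fin_cases i <;> fin_cases j <;> simp)
          rw [hN1]; exact mul_mem hNegcl hMcl
        · have hN1 : N = (-1) * (M * M) := Units.ext (by
            rw [hB, vnegM2, hAA, htv]
            ext i j; fin_cases i <;> fin_cases j <;> simp <;> ring)
          rw [hN1]; exact mul_mem hNegcl (mul_mem hMcl hMcl)
    · -- det = -1, trace = 0
      rw [hA, Matrix.det_fin_two_of] at hdet
      rw [hA, Matrix.trace_fin_two_of] at ht
      have hd : d = -a := by linarith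
      subst hd
      have hdet' : a * a + b * c = 1 := by linear_combination -hdet
      have e2' : q * (2 * a) = b * (p - s) := by linear_combination e2
      have e3' : c * (p - s) = r * (2 * a) := by linear_combination e3
      rcases case_detm1 a b c p q r s hdet' e1 e2' e3' hdB with
        ⟨h1', h2', h3', h4'⟩ | ⟨h1', h2', h3', h4'⟩ | ⟨h1', h2', h3', h4'⟩ |
        ⟨h1', h2', h3', h4'⟩ <;>
        subst h1' <;> subst h2' <;> subst h3' <;> subst h4'
      · have hN1 : N = 1 := Units.ext (by rw [hB, Units.val_one, Matrix.one_fin_two])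
        rw [hN1]; exact one_mem _
      · have hN1 : N = -1 := Units.ext (by
          rw [hB, vneg]
          ext i j; fin_cases i <;> fin_cases j <;> simp)
        rw [hN1]; exact hNegcl
      · have hN1 : N = M := Units.ext (by rw [hB, hA])
        rw [hN1]; exact hMcl
      · have hN1 : N = (-1) * M := Units.ext (by
          rw [hB, vnegM, hA]
          ext i j; fin_cases i <;> fin_cases j <;> simp)
        rw [hN1]; exact mul_mem hNegcl hMcl
  · -- easy direction
    rw [Subgroup.closure_le]
    rintro x hx
    simp only [Set.mem_insert_iff, Set.mem_singleton_iff] at hx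
    rw [SetLike.mem_coe, Subgroup.mem_centralizer_iff]
    rintro g hg
    rw [Set.mem_singleton_iff] at hg
    subst hg
    rcases hx with rfl | rfl
    · simp
    · rfl
end

section
/- Let E = (ℤ² ⋊_{−I} ℤ) ⋊_ψ ℤ where the action ψ of the generator u satisfies ψ(z t^k) = A(z)(n₀ t)^k for z ∈ ℤ², with n₀ ∈ ℤ² and A ∈ GL₂(ℤ). Then the subgroup ℤ² is characteristic in E. -/
/-- The negation automorphism of an additive abelian group. -/
def negAut (V : Type*) [AddCommGroup V] : V ≃+ V :=
  ⟨Equiv.neg V, fun a b => neg_add a b⟩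

/-- The group `ℤ² ⋊_{-I} ℤ`, with generator `t` of the `ℤ` factor acting by `-I`. -/
abbrev G0 : Type :=
  Multiplicative (Fin 2 → ℤ) ⋊[zAction (negAut (Fin 2 → ℤ))] Multiplicative ℤ

open SemidirectProduct Multiplicative in
/-- In `E = (ℤ² ⋊_{-I} ℤ) ⋊_ψ ℤ`, where the generator `u` acts by
`ψ(z t^k) = A(z) (n₀ t)^k`, the subgroup `ℤ²` is characteristic. -/
theorem Z2_characteristic_in_iterated_semidirect (A : Matrix (Fin 2) (Fin 2) ℤ)
    (hA : IsUnit A.det) (n₀ : Fin 2 → ℤ) (ψ : Multiplicative ℤ →* MulAut G0)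
    (hψ1 : ∀ z : Fin 2 → ℤ,
      ψ (Multiplicative.ofAdd 1) (SemidirectProduct.inl (Multiplicative.ofAdd z)) =
        SemidirectProduct.inl (Multiplicative.ofAdd (A.mulVec z)))
    (hψ2 : ψ (Multiplicative.ofAdd 1) (SemidirectProduct.inr (Multiplicative.ofAdd 1)) =
      SemidirectProduct.inl (Multiplicative.ofAdd n₀) *
        SemidirectProduct.inr (Multiplicative.ofAdd 1)) :
    ((SemidirectProduct.inl.comp SemidirectProduct.inl).range :
      Subgroup (G0 ⋊[ψ] Multiplicative ℤ)).Characteristic := by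
  set σ : MulAut G0 := ψ (ofAdd 1) with hσdef
  -- rightHom is invariant under σ
  have hσ : ∀ x : G0, rightHom (σ x) = rightHom x := by
    have : (rightHom.comp σ.toMonoidHom : G0 →* Multiplicative ℤ) = rightHom := by
      apply SemidirectProduct.hom_ext
      · refine MonoidHom.ext fun z => ?_
        simp only [MonoidHom.comp_apply, MulEquiv.coe_toMonoidHom]
        rw [show (inl z : G0) = inl (ofAdd (toAdd z)) by simp, hψ1]
        simp
      · apply MonoidHom.ext_mint
        simp only [MonoidHom.comp_apply, MulEquiv.coe_toMonoidHom]
        rw [hψ2]; simp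
    exact fun x => DFunLike.congr_fun this x
  have hσ' : ∀ x : G0, rightHom (σ⁻¹ x) = rightHom x := by
    intro x
    conv_rhs => rw [show x = σ (σ⁻¹ x) by simp]
    rw [hσ]
  have hpow : ∀ k : ℤ, ∀ x : G0, rightHom ((σ ^ k) x) = rightHom x := by
    intro k
    induction k using Int.induction_on with
    | zero => simp
    | succ n ih =>
      intro x
      rw [show ((n : ℤ) + 1) = (n : ℤ) + 1 from rfl, zpow_add_one, MulAut.mul_apply, ih, hσ]
    | pred n ih =>
      intro x
      rw [zpow_sub_one, MulAut.mul_apply, ih, hσ']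
  have hψright : ∀ g : Multiplicative ℤ, ∀ x : G0, rightHom (ψ g x) = rightHom x := by
    intro g x
    have : ψ g = σ ^ (toAdd g) := by
      rw [hσdef, ← map_zpow]
      congr 1
      simp [← ofAdd_zsmul]
    rw [this, hpow]
  -- the projection E → ℤ × ℤ
  have cond : ∀ g : Multiplicative ℤ,
      (rightHom.comp (ψ g).toMonoidHom : G0 →* Multiplicative ℤ) =
        (MulAut.conj ((1 : Multiplicative ℤ →* Multiplicative ℤ) g)).toMonoidHom.comp
          rightHom := by
    intro g
    ext x
    have := hψright g x
    simpa using this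
  set π₁ : (G0 ⋊[ψ] Multiplicative ℤ) →* Multiplicative ℤ :=
    SemidirectProduct.lift rightHom 1 cond with hπ₁
  set Φ : (G0 ⋊[ψ] Multiplicative ℤ) →* Multiplicative ℤ × Multiplicative ℤ := π₁.prod rightHom with hΦ
  set H : Subgroup (G0 ⋊[ψ] Multiplicative ℤ) := (SemidirectProduct.inl.comp SemidirectProduct.inl).range with hH
  have hker : H = Φ.ker := by
    ext g
    constructor
    · rintro ⟨w, rfl⟩
      rw [MonoidHom.mem_ker, hΦ, MonoidHom.prod_apply, Prod.mk_eq_one]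
      refine ⟨?_, ?_⟩ <;>
        simp only [MonoidHom.comp_apply, hπ₁, SemidirectProduct.lift_inl,
          SemidirectProduct.rightHom_inl]
    · intro hg
      rw [MonoidHom.mem_ker, hΦ, MonoidHom.prod_apply, Prod.mk_eq_one] at hg
      obtain ⟨h1, h2⟩ := hg
      have hg0 : g ∈ (SemidirectProduct.inl : G0 →* G0 ⋊[ψ] Multiplicative ℤ).range := by
        rw [SemidirectProduct.range_inl_eq_ker_rightHom, MonoidHom.mem_ker]; exact h2
      obtain ⟨g0, rfl⟩ := hg0
      rw [hπ₁, SemidirectProduct.lift_inl] at h1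
      have : g0 ∈ (SemidirectProduct.inl :
          Multiplicative (Fin 2 → ℤ) →* G0).range := by
        rw [SemidirectProduct.range_inl_eq_ker_rightHom, MonoidHom.mem_ker]; exact h1
      obtain ⟨w, rfl⟩ := this
      exact ⟨w, rfl⟩
  -- commutator subgroup is contained in H
  have hcomm_le : commutator (G0 ⋊[ψ] Multiplicative ℤ) ≤ H := by
    rw [hker, commutator_def]
    rw [Subgroup.commutator_le]
    intro a _ b _
    rw [MonoidHom.mem_ker, map_commutatorElement]
    exact commutatorElement_eq_one_iff_mul_comm.mpr (mul_comm _ _)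
  -- g ∈ H iff g*g ∈ commutator (G0 ⋊[ψ] Multiplicative ℤ)
  have key1 : ∀ g ∈ H, g * g ∈ commutator (G0 ⋊[ψ] Multiplicative ℤ) := by
    rintro g ⟨w, rfl⟩
    have hc : @Bracket.bracket _ _ (commutatorElement (G := G0 ⋊[ψ] Multiplicative ℤ)) (SemidirectProduct.inl.comp SemidirectProduct.inl w : G0 ⋊[ψ] Multiplicative ℤ)
        (SemidirectProduct.inl (SemidirectProduct.inr (ofAdd (1:ℤ))) : G0 ⋊[ψ] Multiplicative ℤ) =
        SemidirectProduct.inl.comp SemidirectProduct.inl w *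
          SemidirectProduct.inl.comp SemidirectProduct.inl w := by
      simp only [MonoidHom.comp_apply]
      rw [← map_commutatorElement, ← map_mul]
      congr 1
      have step : (inr (ofAdd (1:ℤ)) : G0) * (inl w)⁻¹ * (inr (ofAdd (1:ℤ)))⁻¹
          = inl w := by
        rw [← map_inv, ← map_inv, ← SemidirectProduct.inl_aut]
        simp [zAction, negAut]
        show inl (ofAdd (-(toAdd w)))⁻¹ = inl w
        simp
      have hform : @Bracket.bracket _ _ (commutatorElement (G := G0)) (SemidirectProduct.inl w : G0) (inr (ofAdd (1:ℤ)))
          = inl w * (inr (ofAdd (1:ℤ)) * (inl w)⁻¹ * (inr (ofAdd (1:ℤ)))⁻¹) := by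
        rw [commutatorElement_def]; group
      rw [hform, step]
    rw [← hc]
    exact Subgroup.commutator_mem_commutator (Subgroup.mem_top _) (Subgroup.mem_top _)
  have key2 : ∀ g : G0 ⋊[ψ] Multiplicative ℤ, g * g ∈ commutator (G0 ⋊[ψ] Multiplicative ℤ) → g ∈ H := by
    intro g hg
    have := hcomm_le hg
    rw [hker, MonoidHom.mem_ker] at this ⊢
    rw [map_mul] at this
    have h1 : toAdd (Φ g).1 + toAdd (Φ g).1 = 0 := by
      have := congrArg (fun p => toAdd p.1) this
      simpa using this
    have h2 : toAdd (Φ g).2 + toAdd (Φ g).2 = 0 := by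
      have := congrArg (fun p => toAdd p.2) this
      simpa using this
    have e1 : toAdd (Φ g).1 = 0 := by omega
    have e2 : toAdd (Φ g).2 = 0 := by omega
    have : Φ g = (1, 1) := by
      ext
      · simpa using e1
      · simpa using e2
    exact this
  rw [Subgroup.characteristic_iff_map_le]
  intro φ
  rintro x ⟨g, hg, rfl⟩
  apply key2
  rw [← map_mul]
  have : (commutator (G0 ⋊[ψ] Multiplicative ℤ)).map φ.toMonoidHom = commutator (G0 ⋊[ψ] Multiplicative ℤ) :=
    Subgroup.characteristic_iff_map_eq.mp inferInstance φ
  rw [← this]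
  exact Subgroup.mem_map_of_mem _ (key1 g hg)
end
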